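/- arXiv:0804.2795 — 5 statements merged into one kernel-verified Lean document; each statement's English description precedes it below -/
import Mathlib

section
/- Let θ > 0 and v > 0, set w = θ²/(2v), and let ĥ(ξ) = (θ³/v)·φ(vξ/θ²) for ξ ∈ [0,w], where φ is the traveling-wave profile. Then for all ξ ∈ [0,w]: (4√2/3)·(v^{3/2}/θ²)·ξ·(w − ξ)^{3/2} ≤ ĥ(ξ) ≤ (4√6/3)·(v^{3/2}/θ²)·ξ·(w − ξ)^{3/2}. -/
/-- The traveling-wave profile problem (0.2) with d = 1/2. -/
def IsTWProfile (φ : ℝ → ℝ) : Prop :=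
  ContDiffOn ℝ 1 φ (Set.Icc 0 (1/2)) ∧
  ContDiffOn ℝ 3 φ (Set.Ioo 0 (1/2)) ∧
  (∀ η ∈ Set.Ioo (0:ℝ) (1/2), 0 < φ η) ∧
  φ 0 = 0 ∧ φ (1/2) = 0 ∧
  derivWithin φ (Set.Icc 0 (1/2)) 0 = 1 ∧
  (∀ η ∈ Set.Ioo (0:ℝ) (1/2), φ η * deriv (deriv (deriv φ)) η = 1)

open Set Filter Topology





/-- Maximum principle: if `f'' > 0` wherever `f > 0`, and `f ≤ 0` at the endpoints,
then `f ≤ 0` on the interval. -/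
lemma max_principle {a b : ℝ} {f f' f'' : ℝ → ℝ} (hab : a < b)
    (hc : ContinuousOn f (Set.Icc a b))
    (hd1 : ∀ x ∈ Set.Ioo a b, HasDerivAt f (f' x) x)
    (hd2 : ∀ x ∈ Set.Ioo a b, HasDerivAt f' (f'' x) x)
    (hpos : ∀ x ∈ Set.Ioo a b, 0 < f x → 0 < f'' x)
    (ha : f a ≤ 0) (hb : f b ≤ 0) :
    ∀ x ∈ Set.Icc a b, f x ≤ 0 := by
  by_contra hcon
  push_neg at hcon
  obtain ⟨x0, hx0, hfx0⟩ := hcon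
  obtain ⟨z, hz, hzmax⟩ := isCompact_Icc.exists_isMaxOn (Set.nonempty_Icc.2 hab.le) hc
  have hfz : 0 < f z := lt_of_lt_of_le hfx0 (hzmax hx0)
  have hz' : z ∈ Set.Ioo a b := by
    rcases hz.1.lt_or_eq with h1 | h1
    · rcases hz.2.lt_or_eq with h2 | h2
      · exact ⟨h1, h2⟩
      · exact absurd (h2 ▸ hfz) (not_lt.2 hb)
    · exact absurd (h1 ▸ hfz) (not_lt.2 ha)
  have hmem : Set.Icc a b ∈ 𝓝 z := Icc_mem_nhds hz'.1 hz'.2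
  have hlocmax : IsLocalMax f z := hzmax.isLocalMax hmem
  have hf'z : f' z = 0 := by
    have := hlocmax.deriv_eq_zero
    rwa [(hd1 z hz').deriv] at this
  -- find ε with Icc z (z+ε) ⊆ Ioo a b ∩ {f > 0}
  have hopen : IsOpen (Set.Ioo a b ∩ f ⁻¹' Set.Ioi 0) := by
    have hcont : ContinuousOn f (Set.Ioo a b) :=
      fun x hx => ((hd1 x hx).continuousAt).continuousWithinAt
    exact hcont.isOpen_inter_preimage isOpen_Ioo isOpen_Ioi
  have hzU : z ∈ Set.Ioo a b ∩ f ⁻¹' Set.Ioi 0 := ⟨hz', hfz⟩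
  obtain ⟨δ, hδ, hball⟩ := Metric.isOpen_iff.1 hopen z hzU
  set ε := δ / 2 with hε
  have hεpos : 0 < ε := by positivity
  have hsub : Set.Icc z (z + ε) ⊆ Set.Ioo a b ∩ f ⁻¹' Set.Ioi 0 := by
    intro y hy
    apply hball
    rw [Metric.mem_ball, Real.dist_eq, abs_lt]
    constructor <;> [linarith [hy.1]; linarith [hy.2]]
  -- f' is strictly monotone on [z, z+ε]
  have hf'mono : StrictMonoOn f' (Set.Icc z (z + ε)) := by
    apply strictMonoOn_of_deriv_pos (convex_Icc _ _)
    · intro y hy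
      exact ((hd2 y (hsub hy).1).continuousAt).continuousWithinAt
    · intro y hy
      rw [interior_Icc] at hy
      have hy' : y ∈ Set.Icc z (z + ε) := Ioo_subset_Icc_self hy
      rw [(hd2 y (hsub hy').1).deriv]
      exact hpos y (hsub hy').1 (hsub hy').2
  have hf'pos : ∀ y ∈ Set.Ioo z (z + ε), 0 < f' y := by
    intro y hy
    have := hf'mono (Set.left_mem_Icc.2 (by linarith)) (Ioo_subset_Icc_self hy) hy.1
    rwa [hf'z] at this
  have hfmono : StrictMonoOn f (Set.Icc z (z + ε)) := by
    apply strictMonoOn_of_deriv_pos (convex_Icc _ _)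
    · intro y hy
      exact ((hd1 y (hsub hy).1).continuousAt).continuousWithinAt
    · intro y hy
      rw [interior_Icc] at hy
      rw [(hd1 y (hsub (Ioo_subset_Icc_self hy)).1).deriv]
      exact hf'pos y hy
  have hlt : f z < f (z + ε) :=
    hfmono (Set.left_mem_Icc.2 (by linarith)) (Set.right_mem_Icc.2 (by linarith)) (by linarith)
  have : z + ε ∈ Set.Icc a b := Set.Ioo_subset_Icc_self (hsub (Set.right_mem_Icc.2 (by linarith))).1
  exact absurd (hzmax this) (not_le.2 hlt)

noncomputable def gfun (k x : ℝ) : ℝ := k * x ^ ((1:ℝ)/2) * (1/2 - x) ^ ((3:ℝ)/4)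

noncomputable def gfun' (k x : ℝ) : ℝ :=
  k * (1/2 * x ^ (-(1:ℝ)/2) * (1/2 - x) ^ ((3:ℝ)/4)
      - 3/4 * x ^ ((1:ℝ)/2) * (1/2 - x) ^ (-(1:ℝ)/4))

noncomputable def gfun'' (k x : ℝ) : ℝ :=
  k * (-(1/4) * x ^ (-(3:ℝ)/2) * (1/2 - x) ^ ((3:ℝ)/4)
      - 3/4 * x ^ (-(1:ℝ)/2) * (1/2 - x) ^ (-(1:ℝ)/4)
      - 3/16 * x ^ ((1:ℝ)/2) * (1/2 - x) ^ (-(5:ℝ)/4))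

lemma gfun_hasDeriv (k : ℝ) {x : ℝ} (hx : x ∈ Set.Ioo (0:ℝ) (1/2)) :
    HasDerivAt (gfun k) (gfun' k x) x := by
  have hx0 : x ≠ 0 := ne_of_gt hx.1
  have hs0 : (1/2 - x) ≠ 0 := ne_of_gt (by linarith [hx.2])
  have hA : HasDerivAt (fun y : ℝ => y ^ ((1:ℝ)/2)) ((1/2) * x ^ ((1:ℝ)/2 - 1)) x :=
    Real.hasDerivAt_rpow_const (Or.inl hx0)
  have hin : HasDerivAt (fun y : ℝ => 1/2 - y) (-1) x := by
    simpa using (hasDerivAt_id' x).const_sub (1/2:ℝ)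
  have hB : HasDerivAt (fun y : ℝ => (1/2 - y) ^ ((3:ℝ)/4))
      ((-1) * ((3:ℝ)/4) * (1/2 - x) ^ ((3:ℝ)/4 - 1)) x :=
    hin.rpow_const (Or.inl hs0)
  have h := ((hA.const_mul k).mul hB)
  refine h.congr_deriv ?_
  symm
  simp only [gfun']
  rw [show (1:ℝ)/2 - 1 = -(1:ℝ)/2 by norm_num, show (3:ℝ)/4 - 1 = -(1:ℝ)/4 by norm_num]
  ring

lemma gfun'_hasDeriv (k : ℝ) {x : ℝ} (hx : x ∈ Set.Ioo (0:ℝ) (1/2)) :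
    HasDerivAt (gfun' k) (gfun'' k x) x := by
  have hx0 : x ≠ 0 := ne_of_gt hx.1
  have hs0 : (1/2 - x) ≠ 0 := ne_of_gt (by linarith [hx.2])
  have hin : HasDerivAt (fun y : ℝ => 1/2 - y) (-1) x := by
    simpa using (hasDerivAt_id' x).const_sub (1/2:ℝ)
  have hA1 : HasDerivAt (fun y : ℝ => y ^ (-(1:ℝ)/2)) ((-(1:ℝ)/2) * x ^ (-(1:ℝ)/2 - 1)) x :=
    Real.hasDerivAt_rpow_const (Or.inl hx0)
  have hB1 : HasDerivAt (fun y : ℝ => (1/2 - y) ^ ((3:ℝ)/4))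
      ((-1) * ((3:ℝ)/4) * (1/2 - x) ^ ((3:ℝ)/4 - 1)) x := hin.rpow_const (Or.inl hs0)
  have hA2 : HasDerivAt (fun y : ℝ => y ^ ((1:ℝ)/2)) (((1:ℝ)/2) * x ^ ((1:ℝ)/2 - 1)) x :=
    Real.hasDerivAt_rpow_const (Or.inl hx0)
  have hB2 : HasDerivAt (fun y : ℝ => (1/2 - y) ^ (-(1:ℝ)/4))
      ((-1) * (-(1:ℝ)/4) * (1/2 - x) ^ (-(1:ℝ)/4 - 1)) x := hin.rpow_const (Or.inl hs0)
  have h := (((hA1.const_mul (1/2:ℝ)).mul hB1).sub ((hA2.const_mul (3/4:ℝ)).mul hB2)).const_mul k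
  refine h.congr_deriv ?_
  symm
  simp only [gfun'']
  rw [show -(1:ℝ)/2 - 1 = -(3:ℝ)/2 by norm_num, show (3:ℝ)/4 - 1 = -(1:ℝ)/4 by norm_num,
        show (1:ℝ)/2 - 1 = -(1:ℝ)/2 by norm_num, show -(1:ℝ)/4 - 1 = -(5:ℝ)/4 by norm_num]
  ring

lemma rpow_to_pow {x : ℝ} (hx : 0 < x) (n : ℕ) :
    x ^ ((n:ℝ)/4) = (x ^ ((1:ℝ)/4)) ^ n := by
  rw [← Real.rpow_natCast (x ^ ((1:ℝ)/4)) n, ← Real.rpow_mul hx.le]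
  congr 1
  ring

lemma rpow_to_pow_neg {x : ℝ} (hx : 0 < x) (n : ℕ) :
    x ^ (-(n:ℝ)/4) = ((x ^ ((1:ℝ)/4)) ^ n)⁻¹ := by
  rw [show (-(n:ℝ)/4) = -((n:ℝ)/4) by ring, Real.rpow_neg hx.le, rpow_to_pow hx]

/-- The crucial algebraic identity: `2 g³ g'' + s` in terms of fourth roots. -/
lemma gfun_comb (k : ℝ) {x : ℝ} (hx : x ∈ Set.Ioo (0:ℝ) (1/2)) :
    2 * (gfun k x)^3 * gfun'' k x + (1/2 - x)
      = ((1/2 - x) ^ ((1:ℝ)/4))^4 * (1 - k^4 *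
          (1/2 * (((1/2 - x) ^ ((1:ℝ)/4))^4)^2
           + 3/2 * ((x ^ ((1:ℝ)/4))^4) * (((1/2 - x) ^ ((1:ℝ)/4))^4)
           + 3/8 * ((x ^ ((1:ℝ)/4))^4)^2)) := by
  have hx0 : 0 < x := hx.1
  have hs0 : 0 < (1/2 - x) := by linarith [hx.2]
  set a := x ^ ((1:ℝ)/4) with ha
  set b := (1/2 - x) ^ ((1:ℝ)/4) with hb
  have hapos : 0 < a := Real.rpow_pos_of_pos hx0 _
  have hbpos : 0 < b := Real.rpow_pos_of_pos hs0 _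
  have e1 : x ^ ((1:ℝ)/2) = a ^ 2 := by
    rw [show ((1:ℝ)/2) = ((2:ℕ):ℝ)/4 by norm_num, rpow_to_pow hx0]
  have e2 : x ^ (-(1:ℝ)/2) = (a ^ 2)⁻¹ := by
    rw [show (-(1:ℝ)/2) = -((2:ℕ):ℝ)/4 by norm_num, rpow_to_pow_neg hx0]
  have e3 : x ^ (-(3:ℝ)/2) = (a ^ 6)⁻¹ := by
    rw [show (-(3:ℝ)/2) = -((6:ℕ):ℝ)/4 by norm_num, rpow_to_pow_neg hx0]
  have f1 : (1/2 - x) ^ ((3:ℝ)/4) = b ^ 3 := by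
    rw [show ((3:ℝ)/4) = ((3:ℕ):ℝ)/4 by norm_num, rpow_to_pow hs0]
  have f2 : (1/2 - x) ^ (-(1:ℝ)/4) = (b ^ 1)⁻¹ := by
    rw [show (-(1:ℝ)/4) = -((1:ℕ):ℝ)/4 by norm_num, rpow_to_pow_neg hs0]
  have f3 : (1/2 - x) ^ (-(5:ℝ)/4) = (b ^ 5)⁻¹ := by
    rw [show (-(5:ℝ)/4) = -((5:ℕ):ℝ)/4 by norm_num, rpow_to_pow_neg hs0]
  have hb4 : (1/2 - x) = b ^ 4 := by
    rw [hb, ← Real.rpow_natCast ((1/2 - x) ^ ((1:ℝ)/4)) 4, ← Real.rpow_mul hs0.le]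
    norm_num
  simp only [gfun, gfun'', e1, e2, e3, f1, f2, f3]
  rw [hb4]
  field_simp
  ring

lemma gfun_pos {k x : ℝ} (hk : 0 < k) (hx : x ∈ Set.Ioo (0:ℝ) (1/2)) : 0 < gfun k x := by
  have hs0 : 0 < (1/2 - x) := by linarith [hx.2]
  exact mul_pos (mul_pos hk (Real.rpow_pos_of_pos hx.1 _)) (Real.rpow_pos_of_pos hs0 _)

lemma gfun_key_lower {k x : ℝ} (hk : 0 ≤ k) (hk4 : k^4 ≤ 20/3) (hx : x ∈ Set.Ioo (0:ℝ) (1/2)) :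
    0 ≤ 2 * (gfun k x)^3 * gfun'' k x + (1/2 - x) := by
  rw [gfun_comb k hx]
  have hx0 : 0 < x := hx.1
  have hs0 : 0 < (1/2 - x) := by linarith [hx.2]
  set a := x ^ ((1:ℝ)/4) with ha
  set b := (1/2 - x) ^ ((1:ℝ)/4) with hb
  have hA : a ^ 4 = x := by
    rw [ha, ← Real.rpow_natCast (x ^ ((1:ℝ)/4)) 4, ← Real.rpow_mul hx0.le]; norm_num
  have hB : b ^ 4 = 1/2 - x := by
    rw [hb, ← Real.rpow_natCast ((1/2 - x) ^ ((1:ℝ)/4)) 4, ← Real.rpow_mul hs0.le]; norm_num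
  have hab : a ^ 4 + b ^ 4 = 1/2 := by rw [hA, hB]; ring
  have hA0 : 0 < a ^ 4 := by rw [hA]; exact hx0
  have hB0 : 0 < b ^ 4 := by rw [hB]; exact hs0
  have hk40 : 0 ≤ k ^ 4 := by positivity
  have hQ : 1/2 * (b^4)^2 + 3/2 * a^4 * b^4 + 3/8 * (a^4)^2 ≤ 3/20 := by
    nlinarith [sq_nonneg (a^4 - 1/5)]
  have hQ0 : 0 ≤ 1/2 * (b^4)^2 + 3/2 * a^4 * b^4 + 3/8 * (a^4)^2 := by positivity
  have : k^4 * (1/2 * (b^4)^2 + 3/2 * a^4 * b^4 + 3/8 * (a^4)^2) ≤ 1 := by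
    nlinarith
  nlinarith

lemma gfun_key_upper {k x : ℝ} (hk : 0 ≤ k) (hk4 : 32/3 ≤ k^4) (hx : x ∈ Set.Ioo (0:ℝ) (1/2)) :
    2 * (gfun k x)^3 * gfun'' k x + (1/2 - x) ≤ 0 := by
  rw [gfun_comb k hx]
  have hx0 : 0 < x := hx.1
  have hs0 : 0 < (1/2 - x) := by linarith [hx.2]
  set a := x ^ ((1:ℝ)/4) with ha
  set b := (1/2 - x) ^ ((1:ℝ)/4) with hb
  have hA : a ^ 4 = x := by
    rw [ha, ← Real.rpow_natCast (x ^ ((1:ℝ)/4)) 4, ← Real.rpow_mul hx0.le]; norm_num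
  have hB : b ^ 4 = 1/2 - x := by
    rw [hb, ← Real.rpow_natCast ((1/2 - x) ^ ((1:ℝ)/4)) 4, ← Real.rpow_mul hs0.le]; norm_num
  have hab : a ^ 4 + b ^ 4 = 1/2 := by rw [hA, hB]; ring
  have hA0 : 0 < a ^ 4 := by rw [hA]; exact hx0
  have hB0 : 0 < b ^ 4 := by rw [hB]; exact hs0
  have hQ : 3/32 ≤ 1/2 * (b^4)^2 + 3/2 * a^4 * b^4 + 3/8 * (a^4)^2 := by
    nlinarith [mul_pos hB0 hA0]
  have : 1 ≤ k^4 * (1/2 * (b^4)^2 + 3/2 * a^4 * b^4 + 3/8 * (a^4)^2) := by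
    nlinarith
  nlinarith

section Profile

variable {φ : ℝ → ℝ}

lemma tw_open_cd (hφ : IsTWProfile φ) :
    (∀ x ∈ Set.Ioo (0:ℝ) (1/2), HasDerivAt φ (deriv φ x) x) ∧
    (∀ x ∈ Set.Ioo (0:ℝ) (1/2), HasDerivAt (deriv φ) (deriv (deriv φ) x) x) ∧
    (∀ x ∈ Set.Ioo (0:ℝ) (1/2), HasDerivAt (deriv (deriv φ)) (deriv (deriv (deriv φ)) x) x) := by
  have h3 : ContDiffOn ℝ 3 φ (Set.Ioo (0:ℝ) (1/2)) := hφ.2.1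
  have h2 : ContDiffOn ℝ 2 (deriv φ) (Set.Ioo (0:ℝ) (1/2)) :=
    h3.deriv_of_isOpen isOpen_Ioo (by norm_num)
  have h1 : ContDiffOn ℝ 1 (deriv (deriv φ)) (Set.Ioo (0:ℝ) (1/2)) :=
    h2.deriv_of_isOpen isOpen_Ioo (by norm_num)
  refine ⟨?_, ?_, ?_⟩ <;> intro x hx
  · exact ((h3.differentiableOn (by norm_num)).differentiableAt
      (isOpen_Ioo.mem_nhds hx)).hasDerivAt
  · exact ((h2.differentiableOn (by norm_num)).differentiableAt
      (isOpen_Ioo.mem_nhds hx)).hasDerivAt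
  · exact ((h1.differentiableOn (by norm_num)).differentiableAt
      (isOpen_Ioo.mem_nhds hx)).hasDerivAt

lemma tw_deriv1_tendsto (hφ : IsTWProfile φ) :
    Filter.Tendsto (deriv φ) (𝓝[>] (0:ℝ)) (𝓝 1) := by
  have hu : UniqueDiffOn ℝ (Set.Icc (0:ℝ) (1/2)) := uniqueDiffOn_Icc (by norm_num)
  have hcd : ContinuousOn (derivWithin φ (Set.Icc 0 (1/2))) (Set.Icc (0:ℝ) (1/2)) :=
    hφ.1.continuousOn_derivWithin hu (le_refl _)
  have h0 : Filter.Tendsto (derivWithin φ (Set.Icc 0 (1/2))) (𝓝[Set.Icc (0:ℝ) (1/2)] 0) (𝓝 1) := by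
    have := hcd 0 (by constructor <;> norm_num)
    rw [ContinuousWithinAt, hφ.2.2.2.2.2.1] at this
    exact this
  have h1 : Filter.Tendsto (derivWithin φ (Set.Icc 0 (1/2))) (𝓝[Set.Ioo (0:ℝ) (1/2)] 0) (𝓝 1) :=
    h0.mono_left (nhdsWithin_mono _ Set.Ioo_subset_Icc_self)
  have h2 : Filter.Tendsto (deriv φ) (𝓝[Set.Ioo (0:ℝ) (1/2)] 0) (𝓝 1) := by
    apply h1.congr'
    filter_upwards [self_mem_nhdsWithin] with x hx
    exact derivWithin_of_mem_nhds (Icc_mem_nhds hx.1 (by linarith [hx.2]))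
  rwa [nhdsWithin_Ioo_eq_nhdsGT (by norm_num : (0:ℝ) < 1/2)] at h2

end Profile

lemma tw_d3_pos {φ : ℝ → ℝ} (hφ : IsTWProfile φ) {x : ℝ} (hx : x ∈ Set.Ioo (0:ℝ) (1/2)) :
    0 < deriv (deriv (deriv φ)) x := by
  have h1 := hφ.2.2.2.2.2.2 x hx
  have h2 := hφ.2.2.1 x hx
  nlinarith

lemma tw_d2_mono {φ : ℝ → ℝ} (hφ : IsTWProfile φ) :
    MonotoneOn (deriv (deriv φ)) (Set.Ioo (0:ℝ) (1/2)) := by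
  obtain ⟨hD1, hD2, hD3⟩ := tw_open_cd hφ
  apply monotoneOn_of_deriv_nonneg (convex_Ioo _ _)
  · exact fun x hx => (hD3 x hx).continuousAt.continuousWithinAt
  · intro x hx
    rw [interior_Ioo] at hx
    exact (hD3 x hx).differentiableAt.differentiableWithinAt
  · intro x hx
    rw [interior_Ioo] at hx
    rw [(hD3 x hx).deriv]
    exact (tw_d3_pos hφ hx).le

lemma tw_phi_le_two_x {φ : ℝ → ℝ} (hφ : IsTWProfile φ) :
    ∀ᶠ x in 𝓝[>] (0:ℝ), x ∈ Set.Ioo (0:ℝ) (1/2) ∧ φ x ≤ 2 * x := by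
  obtain ⟨hD1, hD2, hD3⟩ := tw_open_cd hφ
  have hev : ∀ᶠ y in 𝓝[>] (0:ℝ), deriv φ y < 2 :=
    tw_deriv1_tendsto hφ (Iio_mem_nhds (by norm_num))
  rw [eventually_iff_exists_mem] at hev ⊢
  obtain ⟨s, hs, hsub⟩ := hev
  rw [mem_nhdsGT_iff_exists_Ioo_subset] at hs
  obtain ⟨δ, hδ, hδsub⟩ := hs
  refine ⟨Set.Ioo 0 (min δ (1/2)), ?_, ?_⟩
  · rw [mem_nhdsGT_iff_exists_Ioo_subset]
    exact ⟨min δ (1/2), by simp [hδ, lt_min_iff]; norm_num; exact hδ, subset_rfl⟩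
  · intro x hx
    have hx2 : x < 1/2 := lt_of_lt_of_le hx.2 (min_le_right _ _)
    have hxδ : x < δ := lt_of_lt_of_le hx.2 (min_le_left _ _)
    have hxIoo : x ∈ Set.Ioo (0:ℝ) (1/2) := ⟨hx.1, hx2⟩
    refine ⟨hxIoo, ?_⟩
    have hcont : ContinuousOn φ (Set.Icc 0 x) :=
      hφ.1.continuousOn.mono (Set.Icc_subset_Icc le_rfl hx2.le)
    have hder : ∀ y ∈ Set.Ioo (0:ℝ) x, HasDerivAt φ (deriv φ y) y :=
      fun y hy => hD1 y ⟨hy.1, lt_trans hy.2 hx2⟩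
    obtain ⟨c, hc, hceq⟩ := exists_hasDerivAt_eq_slope φ (deriv φ) hx.1 hcont hder
    have hclt : deriv φ c < 2 := hsub c (hδsub ⟨hc.1, lt_trans hc.2 hxδ⟩)
    rw [hφ.2.2.2.1, sub_zero, sub_zero] at hceq
    have hceq' : deriv φ c * x = φ x := (eq_div_iff (ne_of_gt hx.1)).1 hceq
    nlinarith [hx.1]

lemma tw_x_d2_tendsto {φ : ℝ → ℝ} (hφ : IsTWProfile φ) :
    Filter.Tendsto (fun x => x * deriv (deriv φ) x) (𝓝[>] (0:ℝ)) (𝓝 0) := by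
  obtain ⟨hD1, hD2, hD3⟩ := tw_open_cd hφ
  have hmono := tw_d2_mono hφ
  have hd1t := tw_deriv1_tendsto hφ
  have t_half : Filter.Tendsto (fun x : ℝ => x/2) (𝓝[>] (0:ℝ)) (𝓝[>] (0:ℝ)) := by
    rw [tendsto_nhdsWithin_iff]
    constructor
    · simpa using ((continuous_id.div_const 2).tendsto 0).mono_left
        (nhdsWithin_le_nhds (s := Set.Ioi (0:ℝ)))
    · filter_upwards [self_mem_nhdsWithin] with x hx
      exact div_pos (show (0:ℝ) < x from hx) (by norm_num)
  have t_two : Filter.Tendsto (fun x : ℝ => 2*x) (𝓝[>] (0:ℝ)) (𝓝[>] (0:ℝ)) := by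
    rw [tendsto_nhdsWithin_iff]
    constructor
    · simpa using ((continuous_mul_left (2:ℝ)).tendsto 0).mono_left
        (nhdsWithin_le_nhds (s := Set.Ioi (0:ℝ)))
    · filter_upwards [self_mem_nhdsWithin] with x hx
      exact mul_pos (by norm_num) (show (0:ℝ) < x from hx)
  have hLlim : Filter.Tendsto (fun x => 2 * (deriv φ x - deriv φ (x/2))) (𝓝[>] (0:ℝ)) (𝓝 0) := by
    have := ((hd1t.sub (hd1t.comp t_half)).const_mul 2)
    simpa using this
  have hRlim : Filter.Tendsto (fun x => deriv φ (2*x) - deriv φ x) (𝓝[>] (0:ℝ)) (𝓝 0) := by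
    have := ((hd1t.comp t_two).sub hd1t)
    simpa using this
  apply tendsto_of_tendsto_of_tendsto_of_le_of_le' hLlim hRlim
  · -- lower bound : 2(φ'(x) - φ'(x/2)) ≤ x φ''(x)
    filter_upwards [Ioo_mem_nhdsGT_of_mem (Set.mem_Ico.2 ⟨le_rfl, by norm_num⟩ :
      (0:ℝ) ∈ Set.Ico (0:ℝ) (1/4))] with x hx
    have hx0 : 0 < x := hx.1
    have hx4 : x < 1/4 := hx.2
    have hxI : x ∈ Set.Ioo (0:ℝ) (1/2) := ⟨hx0, by linarith⟩
    have hcont : ContinuousOn (deriv φ) (Set.Icc (x/2) x) := by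
      intro y hy
      have hyI : y ∈ Set.Ioo (0:ℝ) (1/2) := ⟨by linarith [hy.1], by linarith [hy.2]⟩
      exact (hD2 y hyI).continuousAt.continuousWithinAt
    have hder : ∀ y ∈ Set.Ioo (x/2) x, HasDerivAt (deriv φ) (deriv (deriv φ) y) y := by
      intro y hy
      exact hD2 y ⟨by linarith [hy.1], by linarith [hy.2]⟩
    obtain ⟨c, hc, hceq⟩ := exists_hasDerivAt_eq_slope (deriv φ) (deriv (deriv φ))
      (by linarith : x/2 < x) hcont hder
    have hcI : c ∈ Set.Ioo (0:ℝ) (1/2) := ⟨by linarith [hc.1], by linarith [hc.2]⟩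
    have hle : deriv (deriv φ) c ≤ deriv (deriv φ) x := hmono hcI hxI hc.2.le
    have hxx : x - x/2 = x/2 := by ring
    rw [hxx] at hceq
    have : deriv φ x - deriv φ (x/2) = deriv (deriv φ) c * (x/2) := by
      rw [hceq]; field_simp
    nlinarith [this, hle, hx0]
  · -- upper bound : x φ''(x) ≤ φ'(2x) - φ'(x)
    filter_upwards [Ioo_mem_nhdsGT_of_mem (Set.mem_Ico.2 ⟨le_rfl, by norm_num⟩ :
      (0:ℝ) ∈ Set.Ico (0:ℝ) (1/4))] with x hx
    have hx0 : 0 < x := hx.1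
    have hx4 : x < 1/4 := hx.2
    have hxI : x ∈ Set.Ioo (0:ℝ) (1/2) := ⟨hx0, by linarith⟩
    have hcont : ContinuousOn (deriv φ) (Set.Icc x (2*x)) := by
      intro y hy
      have hyI : y ∈ Set.Ioo (0:ℝ) (1/2) := ⟨by linarith [hy.1], by linarith [hy.2]⟩
      exact (hD2 y hyI).continuousAt.continuousWithinAt
    have hder : ∀ y ∈ Set.Ioo x (2*x), HasDerivAt (deriv φ) (deriv (deriv φ) y) y := by
      intro y hy
      exact hD2 y ⟨by linarith [hy.1], by linarith [hy.2]⟩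
    obtain ⟨c, hc, hceq⟩ := exists_hasDerivAt_eq_slope (deriv φ) (deriv (deriv φ))
      (by linarith : x < 2*x) hcont hder
    have hcI : c ∈ Set.Ioo (0:ℝ) (1/2) := ⟨by linarith [hc.1], by linarith [hc.2]⟩
    have hle : deriv (deriv φ) x ≤ deriv (deriv φ) c := hmono hxI hcI hc.1.le
    have hxx : 2*x - x = x := by ring
    rw [hxx] at hceq
    have : deriv φ (2*x) - deriv φ x = deriv (deriv φ) c * x := by
      rw [hceq]; field_simp
    nlinarith [this, hle, hx0]

lemma tw_phi_d2_tendsto {φ : ℝ → ℝ} (hφ : IsTWProfile φ) :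
    Filter.Tendsto (fun x => φ x * deriv (deriv φ) x) (𝓝[>] (0:ℝ)) (𝓝 0) := by
  have hxdd := tw_x_d2_tendsto hφ
  have hg : Filter.Tendsto (fun x => 2 * |x * deriv (deriv φ) x|) (𝓝[>] (0:ℝ)) (𝓝 0) := by
    have := (hxdd.abs).const_mul 2
    simpa using this
  apply squeeze_zero_norm' _ hg
  filter_upwards [tw_phi_le_two_x hφ] with x ⟨hxI, hx2⟩
  have hφpos : 0 < φ x := hφ.2.2.1 x hxI
  rw [Real.norm_eq_abs, abs_mul]
  have h1 : |φ x| ≤ 2 * |x| := by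
    rw [abs_of_pos hφpos, abs_of_pos hxI.1]; linarith
  calc |φ x| * |deriv (deriv φ) x| ≤ (2*|x|) * |deriv (deriv φ) x| := by
        apply mul_le_mul_of_nonneg_right h1 (abs_nonneg _)
    _ = 2 * |x * deriv (deriv φ) x| := by rw [abs_mul]; ring

/-- The first integral: `φ φ'' - φ'²/2 - x ≡ -1/2` on the interior. -/
lemma tw_first_integral {φ : ℝ → ℝ} (hφ : IsTWProfile φ) {x : ℝ}
    (hx : x ∈ Set.Ioo (0:ℝ) (1/2)) :
    φ x * deriv (deriv φ) x = (deriv φ x)^2/2 + x - 1/2 := by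
  obtain ⟨hD1, hD2, hD3⟩ := tw_open_cd hφ
  set P : ℝ → ℝ := fun y => φ y * deriv (deriv φ) y - (deriv φ y)^2/2 - y with hP
  have hPd : ∀ y ∈ Set.Ioo (0:ℝ) (1/2), HasDerivAt P 0 y := by
    intro y hy
    have h1 : HasDerivAt (fun z => φ z * deriv (deriv φ) z)
        (deriv φ y * deriv (deriv φ) y + φ y * deriv (deriv (deriv φ)) y) y :=
      (hD1 y hy).mul (hD3 y hy)
    have h2 : HasDerivAt (fun z => (deriv φ z)^2/2)
        ((2 * deriv φ y ^ 1 * deriv (deriv φ) y)/2) y :=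
      ((hD2 y hy).pow 2).div_const 2
    have h3 := (h1.sub h2).sub (hasDerivAt_id y)
    have hval : φ y * deriv (deriv (deriv φ)) y = 1 := hφ.2.2.2.2.2.2 y hy
    refine h3.congr_deriv ?_
    rw [pow_one]
    nlinarith [hval]
  have hPconst : ∀ y ∈ Set.Ioo (0:ℝ) (1/2), ∀ z ∈ Set.Ioo (0:ℝ) (1/2), y ≤ z → P z = P y := by
    intro y hy z hz hyz
    have hcont : ContinuousOn P (Set.Icc y z) := by
      intro t ht
      have htI : t ∈ Set.Ioo (0:ℝ) (1/2) := ⟨lt_of_lt_of_le hy.1 ht.1, lt_of_le_of_lt ht.2 hz.2⟩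
      exact (hPd t htI).continuousAt.continuousWithinAt
    have hder : ∀ t ∈ Set.Ico y z, HasDerivWithinAt P 0 (Set.Ici t) t := by
      intro t ht
      have htI : t ∈ Set.Ioo (0:ℝ) (1/2) := ⟨lt_of_lt_of_le hy.1 ht.1, lt_trans ht.2 hz.2⟩
      exact (hPd t htI).hasDerivWithinAt
    exact constant_of_has_deriv_right_zero hcont hder z (Set.mem_Icc.2 ⟨hyz, le_rfl⟩)
  -- P tends to -1/2 at 0⁺
  have hPlim : Filter.Tendsto P (𝓝[>] (0:ℝ)) (𝓝 (-(1/2))) := by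
    have h1 := tw_phi_d2_tendsto hφ
    have h2 : Filter.Tendsto (fun y => (deriv φ y)^2/2) (𝓝[>] (0:ℝ)) (𝓝 (1/2)) := by
      have := ((tw_deriv1_tendsto hφ).pow 2).div_const 2
      simpa using this
    have h3 : Filter.Tendsto (fun y : ℝ => y) (𝓝[>] (0:ℝ)) (𝓝 0) :=
      (continuous_id.tendsto 0).mono_left nhdsWithin_le_nhds
    have := (h1.sub h2).sub h3
    simpa using this
  -- P is eventually constant equal to P x
  have hPev : Filter.Tendsto P (𝓝[>] (0:ℝ)) (𝓝 (P x)) := by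
    apply Filter.Tendsto.congr' _ tendsto_const_nhds
    filter_upwards [Ioo_mem_nhdsGT_of_mem (Set.mem_Ico.2 ⟨le_rfl, by norm_num⟩ :
      (0:ℝ) ∈ Set.Ico (0:ℝ) (1/2))] with y hy
    rcases le_total y x with h | h
    · exact hPconst y hy x hx h
    · exact (hPconst x hx y hy h).symm
  have : P x = -(1/2) := tendsto_nhds_unique hPev hPlim
  rw [hP] at this
  simp only at this
  linarith [this]

noncomputable def ufun (φ : ℝ → ℝ) (x : ℝ) : ℝ := Real.sqrt (φ x)
noncomputable def ufun' (φ : ℝ → ℝ) (x : ℝ) : ℝ := deriv φ x / (2 * Real.sqrt (φ x))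
noncomputable def ufun'' (φ : ℝ → ℝ) (x : ℝ) : ℝ := (x - 1/2) / (2 * Real.sqrt (φ x)^3)

lemma tw_u_hasDeriv {φ : ℝ → ℝ} (hφ : IsTWProfile φ) {x : ℝ}
    (hx : x ∈ Set.Ioo (0:ℝ) (1/2)) : HasDerivAt (ufun φ) (ufun' φ x) x := by
  obtain ⟨hD1, _, _⟩ := tw_open_cd hφ
  have hφpos : 0 < φ x := hφ.2.2.1 x hx
  have h := (Real.hasDerivAt_sqrt (ne_of_gt hφpos)).comp x (hD1 x hx)
  refine h.congr_deriv ?_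
  symm
  simp only [ufun']
  field_simp

lemma tw_u'_hasDeriv {φ : ℝ → ℝ} (hφ : IsTWProfile φ) {x : ℝ}
    (hx : x ∈ Set.Ioo (0:ℝ) (1/2)) : HasDerivAt (ufun' φ) (ufun'' φ x) x := by
  obtain ⟨hD1, hD2, _⟩ := tw_open_cd hφ
  have hφpos : 0 < φ x := hφ.2.2.1 x hx
  have hspos : 0 < Real.sqrt (φ x) := Real.sqrt_pos.2 hφpos
  have hden : HasDerivAt (fun y => 2 * Real.sqrt (φ y)) (2 * ufun' φ x) x :=
    (tw_u_hasDeriv hφ hx).const_mul 2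
  have h := HasDerivAt.div (hD2 x hx) hden (by positivity)
  refine h.congr_deriv ?_
  symm
  have hs2 : Real.sqrt (φ x) ^ 2 = φ x := Real.sq_sqrt hφpos.le
  have hstar := tw_first_integral hφ hx
  simp only [ufun'', ufun']
  rw [div_eq_div_iff (by positivity) (by positivity)]
  field_simp
  linear_combination (-2) * hstar +
    (-2 * deriv (deriv φ) x) * hs2

lemma gfun_contOn (k : ℝ) : ContinuousOn (gfun k) (Set.Icc (0:ℝ) (1/2)) := by
  intro y _
  apply ContinuousAt.continuousWithinAt
  apply ContinuousAt.mul
  · exact continuousAt_const.mul (Real.continuousAt_rpow_const _ _ (Or.inr (by norm_num)))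
  · exact (Real.continuousAt_rpow_const _ _ (Or.inr (by norm_num))).comp
      ((continuous_const.sub continuous_id).continuousAt)

lemma gfun_zero (k : ℝ) : gfun k 0 = 0 := by
  simp [gfun, Real.zero_rpow (by norm_num : ((1:ℝ)/2) ≠ 0)]

lemma gfun_half (k : ℝ) : gfun k (1/2) = 0 := by
  simp [gfun, Real.zero_rpow (by norm_num : ((3:ℝ)/4) ≠ 0)]

lemma ufun_zero {φ : ℝ → ℝ} (hφ : IsTWProfile φ) : ufun φ 0 = 0 := by
  simp [ufun, hφ.2.2.2.1]

lemma ufun_half {φ : ℝ → ℝ} (hφ : IsTWProfile φ) : ufun φ (1/2) = 0 := by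
  unfold ufun
  rw [hφ.2.2.2.2.1, Real.sqrt_zero]

lemma tw_lower {φ : ℝ → ℝ} (hφ : IsTWProfile φ) {k : ℝ} (hk : 0 < k) (hk4 : k^4 ≤ 20/3) :
    ∀ x ∈ Set.Icc (0:ℝ) (1/2), gfun k x ≤ ufun φ x := by
  have huc : ContinuousOn (ufun φ) (Set.Icc (0:ℝ) (1/2)) :=
    Real.continuous_sqrt.comp_continuousOn hφ.1.continuousOn
  have key := max_principle (f := fun x => gfun k x - ufun φ x)
    (f' := fun x => gfun' k x - ufun' φ x) (f'' := fun x => gfun'' k x - ufun'' φ x)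
    (by norm_num : (0:ℝ) < 1/2)
    ((gfun_contOn k).sub huc)
    (fun x hx => (gfun_hasDeriv k hx).sub (tw_u_hasDeriv hφ hx))
    (fun x hx => (gfun'_hasDeriv k hx).sub (tw_u'_hasDeriv hφ hx))
    ?_ (by show gfun k 0 - ufun φ 0 ≤ 0; rw [gfun_zero, ufun_zero hφ]; norm_num) (by show gfun k (1/2) - ufun φ (1/2) ≤ 0; rw [gfun_half, ufun_half hφ]; norm_num)
  · intro x hx
    have := key x hx
    linarith
  · intro x hx hfx
    have hφpos : 0 < φ x := hφ.2.2.1 x hx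
    have hupos : 0 < ufun φ x := Real.sqrt_pos.2 hφpos
    have hgpos : 0 < gfun k x := gfun_pos hk hx
    have hug : ufun φ x < gfun k x := by linarith
    have hs : 0 < 1/2 - x := by linarith [hx.2]
    have hkey := gfun_key_lower hk.le hk4 hx
    have h1 : -((1/2 - x)/(2*(gfun k x)^3)) ≤ gfun'' k x := by
      rw [neg_le, le_div_iff₀ (by positivity : (0:ℝ) < 2*(gfun k x)^3)]
      nlinarith [hkey]
    have h2 : (1/2 - x)/(2*(gfun k x)^3) < (1/2 - x)/(2*(ufun φ x)^3) := by
      apply div_lt_div_of_pos_left hs (by positivity)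
      have : (ufun φ x)^3 < (gfun k x)^3 := pow_lt_pow_left₀ hug hupos.le (by norm_num)
      linarith
    have h3 : ufun'' φ x = -((1/2 - x)/(2*(ufun φ x)^3)) := by
      simp only [ufun'', ufun]
      ring
    rw [h3]
    linarith

lemma tw_upper {φ : ℝ → ℝ} (hφ : IsTWProfile φ) {k : ℝ} (hk : 0 < k) (hk4 : 32/3 ≤ k^4) :
    ∀ x ∈ Set.Icc (0:ℝ) (1/2), ufun φ x ≤ gfun k x := by
  have huc : ContinuousOn (ufun φ) (Set.Icc (0:ℝ) (1/2)) :=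
    Real.continuous_sqrt.comp_continuousOn hφ.1.continuousOn
  have key := max_principle (f := fun x => ufun φ x - gfun k x)
    (f' := fun x => ufun' φ x - gfun' k x) (f'' := fun x => ufun'' φ x - gfun'' k x)
    (by norm_num : (0:ℝ) < 1/2)
    (huc.sub (gfun_contOn k))
    (fun x hx => (tw_u_hasDeriv hφ hx).sub (gfun_hasDeriv k hx))
    (fun x hx => (tw_u'_hasDeriv hφ hx).sub (gfun'_hasDeriv k hx))
    ?_ (by show ufun φ 0 - gfun k 0 ≤ 0; rw [gfun_zero, ufun_zero hφ]; norm_num) (by show ufun φ (1/2) - gfun k (1/2) ≤ 0; rw [gfun_half, ufun_half hφ]; norm_num)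
  · intro x hx
    have := key x hx
    linarith
  · intro x hx hfx
    have hφpos : 0 < φ x := hφ.2.2.1 x hx
    have hupos : 0 < ufun φ x := Real.sqrt_pos.2 hφpos
    have hgpos : 0 < gfun k x := gfun_pos hk hx
    have hgu : gfun k x < ufun φ x := by linarith
    have hs : 0 < 1/2 - x := by linarith [hx.2]
    have hkey := gfun_key_upper hk.le hk4 hx
    have h1 : gfun'' k x ≤ -((1/2 - x)/(2*(gfun k x)^3)) := by
      rw [le_neg, div_le_iff₀ (by positivity : (0:ℝ) < 2*(gfun k x)^3)]
      nlinarith [hkey]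
    have h2 : (1/2 - x)/(2*(ufun φ x)^3) < (1/2 - x)/(2*(gfun k x)^3) := by
      apply div_lt_div_of_pos_left hs (by positivity)
      have : (gfun k x)^3 < (ufun φ x)^3 := pow_lt_pow_left₀ hgu hgpos.le (by norm_num)
      linarith
    have h3 : ufun'' φ x = -((1/2 - x)/(2*(ufun φ x)^3)) := by
      simp only [ufun'', ufun]
      ring
    rw [h3]
    linarith

lemma gfun_sq {k x : ℝ} (hx : x ∈ Set.Icc (0:ℝ) (1/2)) :
    (gfun k x)^2 = k^2 * (x * (1/2 - x) ^ ((3:ℝ)/2)) := by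
  have hx0 : (0:ℝ) ≤ x := hx.1
  have hs0 : (0:ℝ) ≤ 1/2 - x := by linarith [hx.2]
  have e1 : (x^((1:ℝ)/2))^2 = x := by
    rw [← Real.rpow_natCast (x^((1:ℝ)/2)) 2, ← Real.rpow_mul hx0]
    norm_num
  have e2 : ((1/2 - x)^((3:ℝ)/4))^2 = (1/2 - x)^((3:ℝ)/2) := by
    rw [← Real.rpow_natCast ((1/2 - x)^((3:ℝ)/4)) 2, ← Real.rpow_mul hs0]
    norm_num
  simp only [gfun]
  rw [mul_pow, mul_pow, e1, e2]
  ring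

lemma gfun_nonneg {k x : ℝ} (hk : 0 ≤ k) (hx : x ∈ Set.Icc (0:ℝ) (1/2)) : 0 ≤ gfun k x := by
  have hs0 : (0:ℝ) ≤ 1/2 - x := by linarith [hx.2]
  exact mul_nonneg (mul_nonneg hk (Real.rpow_nonneg hx.1 _)) (Real.rpow_nonneg hs0 _)

lemma tw_phi_nonneg {φ : ℝ → ℝ} (hφ : IsTWProfile φ) {x : ℝ} (hx : x ∈ Set.Icc (0:ℝ) (1/2)) :
    0 ≤ φ x := by
  rcases eq_or_lt_of_le hx.1 with h0 | h0
  · rw [← h0, hφ.2.2.2.1]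
  rcases eq_or_lt_of_le hx.2 with h1 | h1
  · rw [h1, hφ.2.2.2.2.1]
  exact (hφ.2.2.1 x ⟨h0, h1⟩).le

/-- Bounds (2.5) for the profile. -/
lemma profile_bounds {φ : ℝ → ℝ} (hφ : IsTWProfile φ) :
    ∀ x ∈ Set.Icc (0:ℝ) (1/2),
      4*Real.sqrt 2/3 * (x * (1/2 - x) ^ ((3:ℝ)/2)) ≤ φ x ∧
      φ x ≤ 4*Real.sqrt 6/3 * (x * (1/2 - x) ^ ((3:ℝ)/2)) := by
  have hs2 : (Real.sqrt 2)^2 = 2 := Real.sq_sqrt (by norm_num)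
  have hs6 : (Real.sqrt 6)^2 = 6 := Real.sq_sqrt (by norm_num)
  have hs2pos : 0 < Real.sqrt 2 := Real.sqrt_pos.2 (by norm_num)
  have hs6pos : 0 < Real.sqrt 6 := Real.sqrt_pos.2 (by norm_num)
  set k₁ := Real.sqrt (4*Real.sqrt 2/3) with hk₁def
  set k₂ := Real.sqrt (4*Real.sqrt 6/3) with hk₂def
  have hk₁pos : 0 < k₁ := Real.sqrt_pos.2 (by positivity)
  have hk₂pos : 0 < k₂ := Real.sqrt_pos.2 (by positivity)
  have hk₁sq : k₁^2 = 4*Real.sqrt 2/3 := Real.sq_sqrt (by positivity)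
  have hk₂sq : k₂^2 = 4*Real.sqrt 6/3 := Real.sq_sqrt (by positivity)
  have hk₁4 : k₁^4 ≤ 20/3 := by
    have : k₁^4 = (k₁^2)^2 := by ring
    rw [this, hk₁sq]
    nlinarith
  have hk₂4 : 32/3 ≤ k₂^4 := by
    have : k₂^4 = (k₂^2)^2 := by ring
    rw [this, hk₂sq]
    nlinarith
  intro x hx
  have hφ0 : 0 ≤ φ x := tw_phi_nonneg hφ hx
  have husq : (ufun φ x)^2 = φ x := Real.sq_sqrt hφ0
  constructor
  · have hle := tw_lower hφ hk₁pos hk₁4 x hx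
    have := pow_le_pow_left₀ (gfun_nonneg hk₁pos.le hx) hle 2
    rw [husq, gfun_sq hx, hk₁sq] at this
    linarith
  · have hle := tw_upper hφ hk₂pos hk₂4 x hx
    have := pow_le_pow_left₀ (Real.sqrt_nonneg (φ x) : 0 ≤ ufun φ x) hle 2
    rw [Real.sq_sqrt hφ0, gfun_sq hx, hk₂sq] at this
    linarith


/-- Corollary 3.1: the bounds (2.5) transported to the physical traveling wave
`ĥ(ξ) = (θ³/v)·φ(vξ/θ²)` on `[0,w]`, `w = θ²/(2v)`. -/
theorem physical_traveling_wave_bounds (θ v : ℝ) (hθ : 0 < θ) (hv : 0 < v)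
    (w : ℝ) (hw : w = θ^2 / (2*v))
    (φ : ℝ → ℝ) (hφ : IsTWProfile φ)
    (hhat : ℝ → ℝ) (hdef : ∀ ξ, hhat ξ = θ^3 / v * φ (v * ξ / θ^2)) :
    ∀ ξ ∈ Set.Icc (0:ℝ) w,
      (4 * Real.sqrt 2 / 3) * (v ^ ((3:ℝ)/2) / θ^2) * ξ * (w - ξ) ^ ((3:ℝ)/2) ≤ hhat ξ ∧
      hhat ξ ≤ (4 * Real.sqrt 6 / 3) * (v ^ ((3:ℝ)/2) / θ^2) * ξ * (w - ξ) ^ ((3:ℝ)/2) := by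
  intro ξ hξ
  have hθ2 : (0:ℝ) < θ^2 := by positivity
  have hθ0 : θ ≠ 0 := ne_of_gt hθ
  have hv0 : v ≠ 0 := ne_of_gt hv
  set x := v * ξ / θ^2 with hxdef
  have hx0 : 0 ≤ x := div_nonneg (mul_nonneg hv.le hξ.1) hθ2.le
  have hx12 : x ≤ 1/2 := by
    have h1 := hξ.2
    rw [hw] at h1
    have h2 : ξ * (2*v) ≤ θ^2 := (le_div_iff₀ (by positivity)).1 h1
    rw [hxdef, div_le_iff₀ hθ2]
    nlinarith
  obtain ⟨hlow, hup⟩ := profile_bounds hφ x ⟨hx0, hx12⟩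
  rw [hdef ξ]
  have hsx : 1/2 - x = v/θ^2 * (w - ξ) := by
    rw [hxdef, hw]
    field_simp
  have hwξ : 0 ≤ w - ξ := by linarith [hξ.2]
  have hrw : (1/2 - x)^((3:ℝ)/2) = (v/θ^2)^((3:ℝ)/2) * (w - ξ)^((3:ℝ)/2) := by
    rw [hsx, Real.mul_rpow (by positivity) hwξ]
  have hpow : (v/θ^2)^((3:ℝ)/2) = v^((3:ℝ)/2) / θ^3 := by
    rw [Real.div_rpow hv.le (by positivity)]
    congr 1
    rw [← Real.rpow_natCast θ 2, ← Real.rpow_mul hθ.le]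
    rw [show ((2:ℕ):ℝ) * ((3:ℝ)/2) = ((3:ℕ):ℝ) by norm_num, Real.rpow_natCast]
  have hcoeffpos : (0:ℝ) < θ^3/v := by positivity
  constructor
  · have h := mul_le_mul_of_nonneg_left hlow hcoeffpos.le
    have heq : θ^3/v * (4*Real.sqrt 2/3 * (x * (1/2 - x)^((3:ℝ)/2)))
        = 4 * Real.sqrt 2 / 3 * (v ^ ((3:ℝ)/2) / θ^2) * ξ * (w - ξ)^((3:ℝ)/2) := by
      rw [hrw, hpow, hxdef]
      field_simp
    linarith [heq ▸ h]
  · have h := mul_le_mul_of_nonneg_left hup hcoeffpos.le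
    have heq : θ^3/v * (4*Real.sqrt 6/3 * (x * (1/2 - x)^((3:ℝ)/2)))
        = 4 * Real.sqrt 6 / 3 * (v ^ ((3:ℝ)/2) / θ^2) * ξ * (w - ξ)^((3:ℝ)/2) := by
      rw [hrw, hpow, hxdef]
      field_simp
    linarith [heq ▸ h]
end

section
/- Let d > 0 and A₀ > 0, and define φ₀(η) = A₀·η·(d − η)^{3/2} for η ∈ [0,d]. If A₀²·d² ≤ 5/3, then φ₀(η)·φ₀''(η) ≥ (1/2)·(φ₀'(η))² + η − d for all η ∈ (0,d). -/
/-- Inequality (2.2) of Lemma 2.1: `φ₀(η) = A₀·η·(d − η)^{3/2}` is a supersolution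
of `φφ'' = (1/2)(φ')² + η − d` when `A₀²d² ≤ 5/3`. -/
theorem supersolution_of_first_integral (d A₀ : ℝ) (hd : 0 < d) (hA : 0 < A₀)
    (hcond : A₀^2 * d^2 ≤ 5/3)
    (φ₀ : ℝ → ℝ) (hφ₀ : ∀ η, φ₀ η = A₀ * η * (d - η) ^ ((3:ℝ)/2)) :
    ∀ η ∈ Set.Ioo (0:ℝ) d,
      φ₀ η * deriv (deriv φ₀) η ≥ (1/2) * (deriv φ₀ η)^2 + η - d := by
  have hφfun : φ₀ = fun x => A₀ * x * (d - x) ^ ((3:ℝ)/2) := funext hφ₀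
  -- first derivative, valid everywhere (since 3/2 ≥ 1)
  have hD1 : ∀ x : ℝ, HasDerivAt φ₀
      (A₀ * (d - x) ^ ((3:ℝ)/2) - (3/2) * (A₀ * x) * (d - x) ^ ((1:ℝ)/2)) x := by
    intro x
    rw [hφfun]
    have hbase : HasDerivAt (fun y : ℝ => d - y) (-1) x := (hasDerivAt_id x).const_sub d
    have hpow : HasDerivAt (fun y : ℝ => (d - y) ^ ((3:ℝ)/2))
        (((3:ℝ)/2) * (d - x) ^ ((3:ℝ)/2 - 1) * (-1)) x := by
      have := (Real.hasDerivAt_rpow_const (x := d - x) (p := (3:ℝ)/2)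
        (Or.inr (by norm_num))).comp x hbase
      simpa [Function.comp_def] using this
    have hmul : HasDerivAt (fun y : ℝ => (A₀ * y) * (d - y) ^ ((3:ℝ)/2))
        (A₀ * (d - x) ^ ((3:ℝ)/2) +
          (A₀ * x) * (((3:ℝ)/2) * (d - x) ^ ((3:ℝ)/2 - 1) * (-1))) x := by
      have := ((hasDerivAt_id x).const_mul A₀).fun_mul hpow
      simpa using this
    convert hmul using 1
    rw [show (3:ℝ)/2 - 1 = 1/2 by norm_num]
    ring
  have hd1 : deriv φ₀ = fun x => A₀ * (d - x) ^ ((3:ℝ)/2) - (3/2) * (A₀ * x) * (d - x) ^ ((1:ℝ)/2) :=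
    funext fun x => (hD1 x).deriv
  intro η hη
  obtain ⟨hη0, hηd⟩ := hη
  have ht : (0:ℝ) < d - η := by linarith
  have htne : d - η ≠ 0 := ne_of_gt ht
  -- second derivative at η
  have hD2 : HasDerivAt (deriv φ₀)
      (-3 * A₀ * (d - η) ^ ((1:ℝ)/2) + (3/4) * (A₀ * η) * (d - η) ^ (-(1:ℝ)/2)) η := by
    rw [hd1]
    have hbase : HasDerivAt (fun y : ℝ => d - y) (-1) η := (hasDerivAt_id η).const_sub d
    have hpow32 : HasDerivAt (fun y : ℝ => (d - y) ^ ((3:ℝ)/2))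
        (((3:ℝ)/2) * (d - η) ^ ((3:ℝ)/2 - 1) * (-1)) η := by
      have := (Real.hasDerivAt_rpow_const (x := d - η) (p := (3:ℝ)/2)
        (Or.inr (by norm_num))).comp η hbase
      simpa [Function.comp_def] using this
    have hpow12 : HasDerivAt (fun y : ℝ => (d - y) ^ ((1:ℝ)/2))
        (((1:ℝ)/2) * (d - η) ^ ((1:ℝ)/2 - 1) * (-1)) η := by
      have := (Real.hasDerivAt_rpow_const (x := d - η) (p := (1:ℝ)/2)
        (Or.inl htne)).comp η hbase
      simpa [Function.comp_def] using this
    have h1 : HasDerivAt (fun y : ℝ => A₀ * (d - y) ^ ((3:ℝ)/2))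
        (A₀ * (((3:ℝ)/2) * (d - η) ^ ((3:ℝ)/2 - 1) * (-1))) η := hpow32.const_mul A₀
    have h2 : HasDerivAt (fun y : ℝ => (3/2) * (A₀ * y) * (d - y) ^ ((1:ℝ)/2))
        ((3/2) * A₀ * (d - η) ^ ((1:ℝ)/2) +
          ((3/2) * (A₀ * η)) * (((1:ℝ)/2) * (d - η) ^ ((1:ℝ)/2 - 1) * (-1))) η := by
      have := (((hasDerivAt_id η).const_mul ((3/2) * A₀)).fun_mul hpow12)
      simp only [id_eq, mul_one] at this
      convert! this using 1
      · funext y; ring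
      · ring
    have := h1.fun_sub h2
    convert! this using 1
    rw [show (3:ℝ)/2 - 1 = 1/2 by norm_num, show (1:ℝ)/2 - 1 = -(1/2) by norm_num,
      show -(1:ℝ)/2 = -(1/2) by norm_num]
    ring
  have hd1' : deriv φ₀ η = A₀ * (d - η) ^ ((3:ℝ)/2) - (3/2) * (A₀ * η) * (d - η) ^ ((1:ℝ)/2) :=
    (hD1 η).deriv
  rw [hφ₀, hD2.deriv, hd1']
  set s := (d - η) ^ ((1:ℝ)/2) with hs_def
  have hs : 0 < s := Real.rpow_pos_of_pos ht _
  have hss : s * s = d - η := by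
    rw [hs_def, ← Real.rpow_add ht]; norm_num
  have h32 : (d - η) ^ ((3:ℝ)/2) = (d - η) * s := by
    rw [hs_def, show (3:ℝ)/2 = 1 + 1/2 by norm_num, Real.rpow_add ht, Real.rpow_one]
  have hinv : (d - η) ^ (-(1:ℝ)/2) * s = 1 := by
    rw [hs_def, ← Real.rpow_add ht]; norm_num
  rw [h32]
  set u := (d - η) ^ (-(1:ℝ)/2) with hu_def
  have key : A₀^2 * (d^2/2 + d*η/2 - (5/8)*η^2) ≤ 1 := by
    nlinarith [sq_nonneg (η - 2*d/5), sq_nonneg A₀, mul_nonneg (sq_nonneg A₀) (sq_nonneg (η - 2*d/5))]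
  have e1 : A₀ * η * ((d - η) * s) * (-3 * A₀ * s + 3/4 * (A₀ * η) * u)
      = A₀^2 * (-3 * η * (d - η)^2 + (3/4) * η^2 * (d - η)) := by
    linear_combination (-3*A₀^2*η*(d - η)) * hss + (3/4*A₀^2*η^2*(d - η)) * hinv
  have e2 : (A₀ * ((d - η) * s) - 3/2 * (A₀ * η) * s)^2
      = A₀^2 * (d - η) * (d - (5/2)*η)^2 := by
    linear_combination (A₀^2 * (d - (5/2)*η)^2) * hss
  rw [e1, e2]
  nlinarith [mul_nonneg (sub_nonneg.2 key) ht.le]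
end

section
/- Let d > 0 and A₀ > 0, and define φ₀(η) = A₀·η·(d − η)^{3/2} for η ∈ [0,d]. If A₀²·d² ≥ 8/3, then φ₀(η)·φ₀''(η) ≤ (1/2)·(φ₀'(η))² + η − d for all η ∈ (0,d). -/
/-- Inequality (2.3) of Lemma 2.1: `φ₀(η) = A₀·η·(d − η)^{3/2}` is a subsolution
of `φφ'' = (1/2)(φ')² + η − d` when `A₀²d² ≥ 8/3`. -/
theorem subsolution_of_first_integral (d A₀ : ℝ) (hd : 0 < d) (hA : 0 < A₀)
    (hcond : A₀^2 * d^2 ≥ 8/3)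
    (φ₀ : ℝ → ℝ) (hφ₀ : ∀ η, φ₀ η = A₀ * η * (d - η) ^ ((3:ℝ)/2)) :
    ∀ η ∈ Set.Ioo (0:ℝ) d,
      φ₀ η * deriv (deriv φ₀) η ≤ (1/2) * (deriv φ₀ η)^2 + η - d := by
  have hfun : φ₀ = fun η => A₀ * η * (d - η) ^ ((3:ℝ)/2) := funext hφ₀
  subst hfun
  intro η hη
  obtain ⟨hη0, hηd⟩ := hη
  have hpos : 0 < d - η := by linarith
  set f1 : ℝ → ℝ := fun x => A₀ * (d-x)^((3:ℝ)/2) - (3/2)*A₀*x*(d-x)^((1:ℝ)/2) with hf1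
  have h1 : ∀ x : ℝ, HasDerivAt (fun η => A₀ * η * (d-η)^((3:ℝ)/2)) (f1 x) x := by
    intro x
    have hdx : HasDerivAt (fun η : ℝ => d - η) (-1) x := by
      simpa using (hasDerivAt_id x).const_sub d
    have hg : HasDerivAt (fun η : ℝ => (d-η)^((3:ℝ)/2)) (-1 * ((3:ℝ)/2) * (d-x)^((3:ℝ)/2 - 1)) x :=
      hdx.rpow_const (Or.inr (by norm_num))
    have h := ((hasDerivAt_id x).const_mul A₀).mul hg
    refine h.congr_deriv ?_
    have h32 : (3:ℝ)/2 - 1 = 1/2 := by norm_num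
    rw [h32]
    simp only [id_eq]
    ring
  have hderiv1 : deriv (fun η => A₀ * η * (d-η)^((3:ℝ)/2)) = f1 := funext fun x => (h1 x).deriv
  rw [hderiv1]
  have hdx : HasDerivAt (fun η : ℝ => d - η) (-1) η := by
    simpa using (hasDerivAt_id η).const_sub d
  have hg1 : HasDerivAt (fun x : ℝ => (d-x)^((1:ℝ)/2)) (-1*((1:ℝ)/2)*(d-η)^((1:ℝ)/2-1)) η :=
    hdx.rpow_const (Or.inl hpos.ne')
  have hg2 : HasDerivAt (fun x : ℝ => (d-x)^((3:ℝ)/2)) (-1*((3:ℝ)/2)*(d-η)^((3:ℝ)/2-1)) η :=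
    hdx.rpow_const (Or.inr (by norm_num))
  have h2 : HasDerivAt f1
      (A₀ * (-1*((3:ℝ)/2)*(d-η)^((3:ℝ)/2-1)) -
        (((3/2)*A₀*1) * (d-η)^((1:ℝ)/2) + ((3/2)*A₀*η) * (-1*((1:ℝ)/2)*(d-η)^((1:ℝ)/2-1)))) η := by
    have ha := hg2.const_mul A₀
    have hb := (((hasDerivAt_id η).const_mul ((3:ℝ)/2*A₀)).mul hg1)
    have h := ha.sub hb
    simp only [id_eq] at h
    exact h
  rw [h2.deriv]
  -- algebra
  set s : ℝ := (d-η)^((1:ℝ)/2) with hsdef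
  have hs : 0 < s := Real.rpow_pos_of_pos hpos _
  have hs2 : s^2 = d - η := by
    rw [hsdef, ← Real.rpow_natCast ((d-η)^((1:ℝ)/2)) 2, ← Real.rpow_mul hpos.le]
    norm_num
  have h32 : (d-η)^((3:ℝ)/2) = s^3 := by
    rw [hsdef, ← Real.rpow_natCast ((d-η)^((1:ℝ)/2)) 3, ← Real.rpow_mul hpos.le]
    norm_num
  have hm12 : (d-η)^((1:ℝ)/2 - 1) = s⁻¹ := by
    have he : (1:ℝ)/2 - 1 = -(1/2) := by norm_num
    rw [he, Real.rpow_neg hpos.le, hsdef]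
  have h12 : (d-η)^((3:ℝ)/2 - 1) = s := by
    have he : (3:ℝ)/2 - 1 = 1/2 := by norm_num
    rw [he, hsdef]
  rw [hf1]
  simp only [h32, hm12, h12, hsdef.symm]
  have hdval : d = η + s^2 := by linarith [hs2]
  have hsne : s ≠ 0 := hs.ne'
  have key : A₀^2 * ((1/2)*s^4 + (3/2)*η*s^2 + (3/8)*η^2) ≥ 1 := by
    have hc2 : A₀^2 * (η + s^2)^2 ≥ 8/3 := by rw [← hdval]; exact hcond
    nlinarith [mul_nonneg (mul_nonneg (sq_nonneg A₀) hη0.le) (sq_nonneg s),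
      mul_nonneg (sq_nonneg A₀) (sq_nonneg (s^2))]
  have expand : A₀ * η * s ^ 3 *
      (A₀ * (-1 * (3 / 2) * s) - (3 / 2 * A₀ * 1 * s + 3 / 2 * A₀ * η * (-1 * (1 / 2) * s⁻¹)))
      = -3*A₀^2*η*s^4 + (3/4)*A₀^2*η^2*s^2 := by
    field_simp
    ring
  rw [expand, hdval]
  nlinarith [mul_le_mul_of_nonneg_left key (sq_nonneg s), sq_nonneg s, sq_nonneg (s*η)]
end

section
/- Let d > 0 and let φ : [0,d] → ℝ be continuous on [0,d], twice continuously differentiable on (0,d), with φ(η) > 0 for all η ∈ (0,d), φ(0) = φ(d) = 0, and φ(η)·φ''(η) = (1/2)·(φ'(η))² + η − d for all η ∈ (0,d). If A₁ > 0 satisfies A₁²·d² ≤ 8/9, then A₁·η·(d − η)^{3/2} ≤ φ(η) for all η ∈ [0,d]. -/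
open Set Filter Topology

/-- Second-derivative helper: derivative of `g / (2√f)` when `f' = g` at the point. -/
lemma hasDerivAt_sqrt_quot (f g : ℝ → ℝ) (x c : ℝ)
    (hf : HasDerivAt f (g x) x) (hg : HasDerivAt g c x) (hx : 0 < f x) :
    HasDerivAt (fun y => g y / (2 * Real.sqrt (f y)))
      ((2 * f x * c - (g x)^2) / (4 * f x * Real.sqrt (f x))) x := by
  have hs : (0:ℝ) < Real.sqrt (f x) := Real.sqrt_pos.mpr hx
  have h1 : HasDerivAt (fun y => Real.sqrt (f y)) (g x / (2 * Real.sqrt (f x))) x :=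
    hf.sqrt hx.ne'
  have h2 : HasDerivAt (fun y => 2 * Real.sqrt (f y)) (2 * (g x / (2 * Real.sqrt (f x)))) x :=
    h1.const_mul 2
  have h3 := hg.div h2 (by positivity)
  refine h3.congr_deriv (Eq.symm ?_)
  have hsq : Real.sqrt (f x) * Real.sqrt (f x) = f x := Real.mul_self_sqrt hx.le
  field_simp
  ring_nf
  linear_combination (-4 * g x ^ 2) * hsq

set_option maxHeartbeats 2000000 in
/-- Lemma 2.2: `φ_min(η) = A₁·η·(d − η)^{3/2}` with `A₁²d² ≤ 8/9` is a lower bound for any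
positive solution of `φφ'' = (1/2)(φ')² + η − d` with zero boundary values. -/
theorem lower_bound_for_first_integral_solution (d : ℝ) (hd : 0 < d) (φ : ℝ → ℝ)
    (hcont : ContinuousOn φ (Set.Icc 0 d))
    (hC2 : ContDiffOn ℝ 2 φ (Set.Ioo 0 d))
    (hpos : ∀ η ∈ Set.Ioo (0:ℝ) d, 0 < φ η)
    (h0 : φ 0 = 0) (hdd : φ d = 0)
    (heq : ∀ η ∈ Set.Ioo (0:ℝ) d,
      φ η * deriv (deriv φ) η = (1/2) * (deriv φ η)^2 + η - d)
    (A₁ : ℝ) (hA : 0 < A₁) (hcond : A₁^2 * d^2 ≤ 8/9) :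
    ∀ η ∈ Set.Icc (0:ℝ) d, A₁ * η * (d - η) ^ ((3:ℝ)/2) ≤ φ η := by
  set φm : ℝ → ℝ := fun η => A₁ * η * (d - η) ^ ((3:ℝ)/2) with hφm_def
  set φm1 : ℝ → ℝ := fun η => A₁ * (d - η) ^ ((3:ℝ)/2)
      - A₁ * η * ((3:ℝ)/2) * (d - η) ^ ((1:ℝ)/2) with hφm1_def
  -- derivative of φm on (0,d)
  have hm1 : ∀ x ∈ Set.Ioo (0:ℝ) d, HasDerivAt φm (φm1 x) x := by
    intro x hx
    have hs : 0 < d - x := sub_pos.mpr hx.2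
    have hpow : HasDerivAt (fun y : ℝ => (d - y) ^ ((3:ℝ)/2))
        ((3:ℝ)/2 * (d - x) ^ ((3:ℝ)/2 - 1) * (-1)) x :=
      (Real.hasDerivAt_rpow_const (Or.inl hs.ne')).comp x ((hasDerivAt_id x).const_sub d)
    have hmul : HasDerivAt (fun y : ℝ => A₁ * y) A₁ x := by
      simpa using (hasDerivAt_id x).const_mul A₁
    have := hmul.mul hpow
    refine this.congr_deriv (Eq.symm ?_)
    rw [show (3:ℝ)/2 - 1 = (1:ℝ)/2 by norm_num]
    simp only [hφm1_def]
    ring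
  -- φ is differentiable with differentiable derivative on (0,d)
  have hCd : DifferentiableOn ℝ φ (Set.Ioo 0 d) ∧ ContDiffOn ℝ 1 (deriv φ) (Set.Ioo 0 d) := by
    have h2 : ContDiffOn ℝ (1 + 1) φ (Set.Ioo 0 d) := by norm_num; exact hC2
    obtain ⟨a, _, b⟩ := (contDiffOn_succ_iff_deriv_of_isOpen isOpen_Ioo).mp h2
    exact ⟨a, b⟩
  have hφd : ∀ x ∈ Set.Ioo (0:ℝ) d, HasDerivAt φ (deriv φ x) x := fun x hx =>
    (hCd.1.differentiableAt (isOpen_Ioo.mem_nhds hx)).hasDerivAt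
  have hφd2 : ∀ x ∈ Set.Ioo (0:ℝ) d, HasDerivAt (deriv φ) (deriv (deriv φ) x) x := fun x hx =>
    (((hCd.2.differentiableOn one_ne_zero) x hx).differentiableAt
      (isOpen_Ioo.mem_nhds hx)).hasDerivAt
  -- positivity of φm on the interior
  have hφmpos : ∀ x ∈ Set.Ioo (0:ℝ) d, 0 < φm x := by
    intro x hx
    have hs : 0 < d - x := sub_pos.mpr hx.2
    exact mul_pos (mul_pos hA hx.1) (Real.rpow_pos_of_pos hs _)
  -- the comparison function w = √φm − √φ
  set w : ℝ → ℝ := fun x => Real.sqrt (φm x) - Real.sqrt (φ x) with hw_def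
  set g : ℝ → ℝ := fun x => φm1 x / (2 * Real.sqrt (φm x))
      - deriv φ x / (2 * Real.sqrt (φ x)) with hg_def
  have hw' : ∀ x ∈ Set.Ioo (0:ℝ) d, HasDerivAt w (g x) x := by
    intro x hx
    exact ((hm1 x hx).sqrt (hφmpos x hx).ne').sub ((hφd x hx).sqrt (hpos x hx).ne')
  -- continuity of w on [0,d]
  have hφmcont : Continuous φm := by
    have h1 : Continuous fun y : ℝ => (d - y) ^ ((3:ℝ)/2) := by
      rw [continuous_iff_continuousAt]
      intro x
      exact (Real.continuousAt_rpow_const _ _ (Or.inr (by norm_num))).comp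
        ((continuous_const.sub continuous_id).continuousAt)
    exact (continuous_const.mul continuous_id).mul h1
  have hwcont : ContinuousOn w (Set.Icc 0 d) :=
    (Real.continuous_sqrt.comp hφmcont).continuousOn.sub
      (Real.continuous_sqrt.comp_continuousOn hcont)
  have hw0 : w 0 = 0 := by simp [hw_def, hφm_def, h0]
  have hwd : w d = 0 := by
    simp [hw_def, hφm_def, hdd, Real.zero_rpow (by norm_num : (3:ℝ)/2 ≠ 0)]
  -- main claim: w ≤ 0 on [0,d]
  have key : ∀ x ∈ Set.Icc (0:ℝ) d, w x ≤ 0 := by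
    obtain ⟨η₀, hη₀, hmax⟩ := isCompact_Icc.exists_isMaxOn (Set.nonempty_Icc.mpr hd.le) hwcont
    intro x hx
    by_cases hM : w η₀ ≤ 0
    · exact le_trans (hmax hx) hM
    push_neg at hM
    exfalso
    -- η₀ is interior
    have hη₀I : η₀ ∈ Set.Ioo (0:ℝ) d := by
      rcases hη₀.1.eq_or_lt with h | h
      · rw [← h] at hM; rw [hw0] at hM; exact absurd hM (lt_irrefl 0)
      rcases hη₀.2.eq_or_lt with h' | h'
      · rw [h'] at hM; rw [hwd] at hM; exact absurd hM (lt_irrefl 0)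
      exact ⟨h, h'⟩
    have hs : 0 < d - η₀ := sub_pos.mpr hη₀I.2
    set t := (d - η₀) ^ ((1:ℝ)/2) with ht_def
    have ht : 0 < t := Real.rpow_pos_of_pos hs _
    have ht2 : t * t = d - η₀ := by
      rw [ht_def, ← Real.rpow_add hs]; norm_num
    have h32 : (d - η₀) ^ ((3:ℝ)/2) = (d - η₀) * t := by
      rw [ht_def, show (3:ℝ)/2 = 1 + 1/2 by norm_num, Real.rpow_add hs, Real.rpow_one]
    -- second derivative of φm at η₀
    set cm2 : ℝ := A₁ * (-3) * t + A₁ * η₀ * (3/4) * (t / (d - η₀)) with hcm2_def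
    have hm2 : HasDerivAt φm1 cm2 η₀ := by
      have hpow32 : HasDerivAt (fun y : ℝ => (d - y) ^ ((3:ℝ)/2))
          ((3:ℝ)/2 * (d - η₀) ^ ((3:ℝ)/2 - 1) * (-1)) η₀ :=
        (Real.hasDerivAt_rpow_const (Or.inl hs.ne')).comp η₀ ((hasDerivAt_id η₀).const_sub d)
      have hpow12 : HasDerivAt (fun y : ℝ => (d - y) ^ ((1:ℝ)/2))
          ((1:ℝ)/2 * (d - η₀) ^ ((1:ℝ)/2 - 1) * (-1)) η₀ :=
        (Real.hasDerivAt_rpow_const (Or.inl hs.ne')).comp η₀ ((hasDerivAt_id η₀).const_sub d)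
      have hmul : HasDerivAt (fun y : ℝ => A₁ * y * ((3:ℝ)/2)) (A₁ * ((3:ℝ)/2)) η₀ := by
        simpa using ((hasDerivAt_id η₀).const_mul A₁).mul_const ((3:ℝ)/2)
      have := (hpow32.const_mul A₁).sub (hmul.mul hpow12)
      refine this.congr_deriv (Eq.symm ?_)
      have e1 : (d - η₀) ^ ((3:ℝ)/2 - 1) = t := by
        rw [show (3:ℝ)/2 - 1 = (1:ℝ)/2 by norm_num, ht_def]
      have e2 : (d - η₀) ^ ((1:ℝ)/2 - 1) = t / (d - η₀) := by
        rw [Real.rpow_sub hs, Real.rpow_one, ht_def]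
      rw [e1, e2, hcm2_def, ht_def]
      ring
    -- gather point values
    have hb := hpos η₀ hη₀I
    have hbm := hφmpos η₀ hη₀I
    have hφmgt : φ η₀ < φm η₀ := by
      have h1 : Real.sqrt (φ η₀) < Real.sqrt (φm η₀) := by
        have := hM; simp only [hw_def] at this; linarith
      exact (Real.sqrt_lt_sqrt_iff hb.le).mp h1
    -- second derivative values
    set Cm : ℝ := (2 * φm η₀ * cm2 - (φm1 η₀)^2) / (4 * φm η₀ * Real.sqrt (φm η₀)) with hCm_def
    set Cφ : ℝ := (2 * φ η₀ * deriv (deriv φ) η₀ - (deriv φ η₀)^2)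
        / (4 * φ η₀ * Real.sqrt (φ η₀)) with hCφ_def
    have hg' : HasDerivAt g (Cm - Cφ) η₀ :=
      (hasDerivAt_sqrt_quot φm φm1 η₀ cm2 (hm1 η₀ hη₀I) hm2 hbm).sub
        (hasDerivAt_sqrt_quot φ (deriv φ) η₀ (deriv (deriv φ) η₀)
          (hφd η₀ hη₀I) (hφd2 η₀ hη₀I) hb)
    -- the crucial inequality: Cm − Cφ > 0
    have hCpos : 0 < Cm - Cφ := by
      have heq0 := heq η₀ hη₀I
      have hnumφ : 2 * φ η₀ * deriv (deriv φ) η₀ - (deriv φ η₀)^2 = 2 * (η₀ - d) := by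
        linarith
      have e1 : φm η₀ = A₁ * η₀ * ((d - η₀) * t) := by rw [hφm_def]; simp only []; rw [h32]
      have e2 : φm1 η₀ = A₁ * t * ((d - η₀) - 3/2 * η₀) := by
        simp only [hφm1_def]; rw [h32, ht_def]; ring
      have hnumm : 2 * (η₀ - d) < 2 * φm η₀ * cm2 - (φm1 η₀)^2 := by
        have hq : A₁^2 * (3/4 * η₀^2 + 3 * η₀ * (d - η₀) + (d - η₀)^2) < 2 := by
          nlinarith [sq_nonneg (A₁ * (3 * η₀ - 2 * (d - η₀))), sq_nonneg A₁, hη₀I.1, hs]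
        have e3 : 2 * φm η₀ * cm2 - (φm1 η₀)^2
            = - (A₁^2 * ((d - η₀) * (3/4 * η₀^2 + 3 * η₀ * (d - η₀) + (d - η₀)^2))) := by
          rw [e1, e2, hcm2_def, ← ht2]
          field_simp
          ring
        rw [e3]
        nlinarith [mul_pos hs (show (0:ℝ) < 2 - A₁^2 * (3/4 * η₀^2 + 3 * η₀ * (d - η₀) + (d - η₀)^2) by linarith)]
      -- compare the two quotients
      have hra : 0 < Real.sqrt (φ η₀) := Real.sqrt_pos.mpr hb
      have hrb : 0 < Real.sqrt (φm η₀) := Real.sqrt_pos.mpr hbm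
      have hrab : Real.sqrt (φ η₀) < Real.sqrt (φm η₀) := Real.sqrt_lt_sqrt hb.le hφmgt
      have hA' : 0 < 4 * φ η₀ * Real.sqrt (φ η₀) := by positivity
      have hB' : 0 < 4 * φm η₀ * Real.sqrt (φm η₀) := by positivity
      have hAB : 4 * φ η₀ * Real.sqrt (φ η₀) < 4 * φm η₀ * Real.sqrt (φm η₀) := by
        have := mul_lt_mul'' hφmgt hrab hb.le hra.le
        linarith
      have hCφval : Cφ = 2 * (η₀ - d) / (4 * φ η₀ * Real.sqrt (φ η₀)) := by
        rw [hCφ_def, hnumφ]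
      have hCφneg : Cφ < 0 := by
        rw [hCφval]
        apply div_neg_of_neg_of_pos _ hA'
        linarith [hη₀I.2]
      rw [sub_pos, hCφval]
      rcases le_or_gt 0 (2 * φm η₀ * cm2 - (φm1 η₀)^2) with hc | hc
      · calc 2 * (η₀ - d) / (4 * φ η₀ * Real.sqrt (φ η₀)) < 0 := by
              apply div_neg_of_neg_of_pos _ hA'; linarith [hη₀I.2]
          _ ≤ Cm := by rw [hCm_def]; positivity
      · rw [hCm_def, div_lt_div_iff₀ hA' hB']
        have h1 : 2 * (η₀ - d) * (4 * φm η₀ * Real.sqrt (φm η₀))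
            < (2 * φm η₀ * cm2 - (φm1 η₀)^2) * (4 * φm η₀ * Real.sqrt (φm η₀)) :=
          mul_lt_mul_of_pos_right hnumm hB'
        have h2 : (2 * φm η₀ * cm2 - (φm1 η₀)^2) * (4 * φm η₀ * Real.sqrt (φm η₀))
            ≤ (2 * φm η₀ * cm2 - (φm1 η₀)^2) * (4 * φ η₀ * Real.sqrt (φ η₀)) := by
          apply mul_le_mul_of_nonpos_left (le_of_lt hAB) hc.le
        calc 2 * (η₀ - d) * (4 * φm η₀ * Real.sqrt (φm η₀))
            < (2 * φm η₀ * cm2 - (φm1 η₀)^2) * (4 * φm η₀ * Real.sqrt (φm η₀)) := h1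
          _ ≤ (2 * φm η₀ * cm2 - (φm1 η₀)^2) * (4 * φ η₀ * Real.sqrt (φ η₀)) := h2
    -- local max ⇒ g η₀ = 0
    have hloc : IsLocalMax w η₀ := hmax.isLocalMax (Icc_mem_nhds hη₀I.1 hη₀I.2)
    have hg0 : g η₀ = 0 := by
      have h1 := hloc.deriv_eq_zero
      have h2 := (hw' η₀ hη₀I).deriv
      rw [← h2, h1]
    -- g > 0 just to the right of η₀
    have hslope : Tendsto (slope g η₀) (𝓝[>] η₀) (𝓝 (Cm - Cφ)) :=
      (hasDerivAt_iff_tendsto_slope.mp hg').mono_left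
        (nhdsWithin_mono _ fun x hx => Set.mem_compl_singleton_iff.mpr (ne_of_gt hx))
    have hev : ∀ᶠ x in 𝓝[>] η₀, 0 < slope g η₀ x := hslope.eventually (eventually_gt_nhds hCpos)
    obtain ⟨u, hu, hsub⟩ := mem_nhdsGT_iff_exists_Ioo_subset.mp hev
    set b := min u d with hb_def
    have hη₀b : η₀ < b := lt_min hu hη₀I.2
    set m := (η₀ + b) / 2 with hm_def
    have hm1' : η₀ < m := by rw [hm_def]; linarith
    have hm2' : m < b := by rw [hm_def]; linarith
    have hmd : m < d := lt_of_lt_of_le hm2' (min_le_right u d)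
    have hmu : m < u := lt_of_lt_of_le hm2' (min_le_left u d)
    -- strict monotonicity on [η₀, m]
    have hmono : StrictMonoOn w (Set.Icc η₀ m) := by
      apply strictMonoOn_of_deriv_pos (convex_Icc _ _)
      · apply hwcont.mono
        intro x hx
        exact ⟨le_trans hη₀I.1.le hx.1, le_trans hx.2 hmd.le⟩
      · intro x hx
        rw [interior_Icc] at hx
        have hxI : x ∈ Set.Ioo (0:ℝ) d := ⟨lt_trans hη₀I.1 hx.1, lt_trans hx.2 hmd⟩
        rw [(hw' x hxI).deriv]
        have hslx : 0 < slope g η₀ x := hsub ⟨hx.1, lt_trans hx.2 hmu⟩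
        rw [slope_def_field] at hslx
        have hx0 : 0 < x - η₀ := sub_pos.mpr hx.1
        rw [hg0, sub_zero] at hslx
        rcases div_pos_iff.mp hslx with ⟨h1, _⟩ | ⟨_, h2⟩
        · exact h1
        · linarith
    have hlt : w η₀ < w m :=
      hmono (Set.left_mem_Icc.mpr hm1'.le) (Set.right_mem_Icc.mpr hm1'.le) hm1'
    have hle : w m ≤ w η₀ := hmax ⟨le_trans hη₀I.1.le hm1'.le, hmd.le⟩
    linarith
  -- conclude
  intro η hη
  have h1 := key η hη
  have hφmnn : 0 ≤ A₁ * η * (d - η) ^ ((3:ℝ)/2) :=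
    mul_nonneg (mul_nonneg hA.le hη.1) (Real.rpow_nonneg (by linarith [hη.2]) _)
  have hφnn : 0 ≤ φ η := by
    rcases hη.1.eq_or_lt with h | h
    · rw [← h, h0]
    rcases hη.2.eq_or_lt with h' | h'
    · rw [h', hdd]
    exact (hpos η ⟨h, h'⟩).le
  have h2 : Real.sqrt (φm η) ≤ Real.sqrt (φ η) := by
    simp only [hw_def] at h1; linarith
  calc A₁ * η * (d - η) ^ ((3:ℝ)/2) = φm η := rfl
    _ = Real.sqrt (φm η) ^ 2 := (Real.sq_sqrt hφmnn).symm
    _ ≤ Real.sqrt (φ η) ^ 2 := pow_le_pow_left₀ (Real.sqrt_nonneg _) h2 2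
    _ = φ η := Real.sq_sqrt hφnn
end

section
/- Let d > 0 and let φ : [0,d] → ℝ be continuous on [0,d], twice continuously differentiable on (0,d), with φ(η) > 0 for all η ∈ (0,d), φ(0) = φ(d) = 0, and φ(η)·φ''(η) = (1/2)·(φ'(η))² + η − d for all η ∈ (0,d). If A₂ > 0 satisfies A₂²·d² ≥ 8/3, then φ(η) ≤ A₂·η·(d − η)^{3/2} for all η ∈ [0,d]. -/
open Real Set Filter

lemma sqrtComp {ψ : ℝ → ℝ} {x p : ℝ} (hψ : 0 < ψ x) (hd : HasDerivAt ψ p x) :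
    HasDerivAt (fun y => Real.sqrt (ψ y)) (1 / (2 * Real.sqrt (ψ x)) * p) x :=
  (Real.hasDerivAt_sqrt hψ.ne').comp x hd

lemma sqrtComp' {ψ : ℝ → ℝ} {x p : ℝ} (hψ : 0 < ψ x) (hd : HasDerivAt ψ p x) :
    HasDerivAt (fun y => Real.sqrt (ψ y)) (p / (2 * Real.sqrt (ψ x))) x := by
  have h := sqrtComp hψ hd
  convert h using 1
  ring

lemma divSqrt {ψ N : ℝ → ℝ} {x p q : ℝ} (hψ : 0 < ψ x) (hψd : HasDerivAt ψ p x)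
    (hNd : HasDerivAt N q x) (hval : N x = p) :
    HasDerivAt (fun y => N y / (2 * Real.sqrt (ψ y)))
      ((2 * ψ x * q - p ^ 2) / (4 * ψ x * Real.sqrt (ψ x))) x := by
  have hs : 0 < Real.sqrt (ψ x) := Real.sqrt_pos.2 hψ
  have hden : HasDerivAt (fun y => 2 * Real.sqrt (ψ y)) (2 * (1/(2*Real.sqrt (ψ x)) * p)) x :=
    (sqrtComp hψ hψd).const_mul 2
  have h := hNd.div hden (by positivity)
  refine h.congr_deriv ?_
  set s := Real.sqrt (ψ x) with hsdef
  have hss : s * s = ψ x := Real.mul_self_sqrt hψ.le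
  rw [hval, ← hss]
  field_simp
  ring

lemma rpow_three_halves {t : ℝ} (ht : 0 ≤ t) : t ^ ((3:ℝ)/2) = t * Real.sqrt t := by
  rw [show (3:ℝ)/2 = 1 + 1/2 by norm_num, Real.rpow_add' ht (by norm_num), Real.rpow_one,
    Real.sqrt_eq_rpow]

lemma g_deriv (d A₂ x : ℝ) (h2 : x < d) :
    HasDerivAt (fun y => A₂ * y * ((d - y) * Real.sqrt (d - y)))
      (A₂ * (Real.sqrt (d - x) ^ 3 - 3/2 * (x * Real.sqrt (d - x)))) x := by
  have hu : 0 < d - x := sub_pos.2 h2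
  have hsp : 0 < Real.sqrt (d - x) := Real.sqrt_pos.2 hu
  have hdx : HasDerivAt (fun y : ℝ => d - y) (-1) x := by
    simpa using (hasDerivAt_id x).const_sub d
  have hS : HasDerivAt (fun y => Real.sqrt (d - y)) (1/(2*Real.sqrt (d-x)) * (-1)) x :=
    sqrtComp hu hdx
  have hinner : HasDerivAt (fun y => (d - y) * Real.sqrt (d - y))
      ((-1) * Real.sqrt (d-x) + (d-x) * (1/(2*Real.sqrt (d-x)) * (-1))) x := hdx.mul hS
  have hay : HasDerivAt (fun y : ℝ => A₂ * y) A₂ x := by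
    simpa using (hasDerivAt_id x).const_mul A₂
  have h := hay.mul hinner
  refine h.congr_deriv ?_
  set s := Real.sqrt (d - x) with hsdef
  have hss : s * s = d - x := Real.mul_self_sqrt hu.le
  rw [← hss]
  field_simp
  ring

lemma F1_deriv (d A₂ x : ℝ) (h2 : x < d) :
    HasDerivAt (fun y => A₂ * (Real.sqrt (d - y) ^ 3 - 3/2 * (y * Real.sqrt (d - y))))
      (A₂ * (-3 * Real.sqrt (d-x) + 3/4 * x / Real.sqrt (d-x))) x := by
  have hu : 0 < d - x := sub_pos.2 h2
  have hsp : 0 < Real.sqrt (d - x) := Real.sqrt_pos.2 hu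
  have hdx : HasDerivAt (fun y : ℝ => d - y) (-1) x := by
    simpa using (hasDerivAt_id x).const_sub d
  have hS : HasDerivAt (fun y => Real.sqrt (d - y)) (1/(2*Real.sqrt (d-x)) * (-1)) x :=
    sqrtComp hu hdx
  have hS3 := hS.pow 3
  have hyS : HasDerivAt (fun y => y * Real.sqrt (d - y))
      (1 * Real.sqrt (d-x) + x * (1/(2*Real.sqrt (d-x)) * (-1))) x :=
    (hasDerivAt_id x).mul hS
  have h := (hS3.sub (hyS.const_mul (3/2 : ℝ))).const_mul A₂
  refine h.congr_deriv ?_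
  set s := Real.sqrt (d - x) with hsdef
  have hss : s * s = d - x := Real.mul_self_sqrt hu.le
  push_cast
  field_simp
  ring

lemma supersol (d A₂ x : ℝ) (hA : 0 < A₂) (hcond : A₂^2*d^2 ≥ 8/3) (h1 : 0 < x) (h2 : x < d) :
    2 * (A₂ * x * ((d-x) * Real.sqrt (d-x))) *
        (A₂ * (-3*Real.sqrt (d-x) + 3/4*x/Real.sqrt (d-x)))
      - (A₂ * (Real.sqrt (d-x)^3 - 3/2*(x*Real.sqrt (d-x))))^2 ≤ 2*(x - d) := by
  have hu : 0 < d - x := sub_pos.2 h2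
  have hsp : 0 < Real.sqrt (d - x) := Real.sqrt_pos.2 hu
  set s := Real.sqrt (d - x) with hsdef
  have hss : s * s = d - x := Real.mul_self_sqrt hu.le
  have e1 : 2 * (A₂ * x * ((d-x) * s)) * (A₂ * (-3*s + 3/4*x/s))
      - (A₂ * (s^3 - 3/2*(x*s)))^2
      = -(A₂^2*(d-x)*((d-x)^2 + 3*x*(d-x) + 3/4*x^2)) := by
    rw [← hss]; field_simp; ring
  rw [e1]
  have h5 : 0 ≤ (d-x) * (A₂^2*d^2 - 8/3) := mul_nonneg hu.le (by linarith)
  have h6 : 0 ≤ A₂^2*(d-x)*((d-x)^2/4 + 3/2*(x*(d-x))) := by positivity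
  nlinarith [h5, h6]

/-- Lemma 2.3: `φ_max(η) = A₂·η·(d − η)^{3/2}` with `A₂²d² ≥ 8/3` is an upper bound for any
positive solution of `φφ'' = (1/2)(φ')² + η − d` with zero boundary values. -/
theorem upper_bound_for_first_integral_solution (d : ℝ) (hd : 0 < d) (φ : ℝ → ℝ)
    (hcont : ContinuousOn φ (Set.Icc 0 d))
    (hC2 : ContDiffOn ℝ 2 φ (Set.Ioo 0 d))
    (hpos : ∀ η ∈ Set.Ioo (0:ℝ) d, 0 < φ η)
    (h0 : φ 0 = 0) (hdd : φ d = 0)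
    (heq : ∀ η ∈ Set.Ioo (0:ℝ) d,
      φ η * deriv (deriv φ) η = (1/2) * (deriv φ η)^2 + η - d)
    (A₂ : ℝ) (hA : 0 < A₂) (hcond : A₂^2 * d^2 ≥ 8/3) :
    ∀ η ∈ Set.Icc (0:ℝ) d, φ η ≤ A₂ * η * (d - η) ^ ((3:ℝ)/2) := by
  -- replace the rpow by a sqrt expression
  set g : ℝ → ℝ := fun y => A₂ * y * ((d - y) * Real.sqrt (d - y)) with hgdef
  have hrpow : ∀ η ∈ Set.Icc (0:ℝ) d, A₂ * η * (d - η) ^ ((3:ℝ)/2) = g η := by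
    intro η hη
    rw [hgdef]
    simp only []
    rw [rpow_three_halves (by linarith [hη.2] : (0:ℝ) ≤ d - η)]
  -- basic derivative facts for φ
  have hφdiff : DifferentiableOn ℝ φ (Set.Ioo 0 d) := hC2.differentiableOn (by norm_num)
  have hφ'c : ContDiffOn ℝ 1 (deriv φ) (Set.Ioo 0 d) :=
    hC2.deriv_of_isOpen isOpen_Ioo (by norm_num)
  have hφ'diff : DifferentiableOn ℝ (deriv φ) (Set.Ioo 0 d) := hφ'c.differentiableOn one_ne_zero
  have hφD : ∀ x ∈ Set.Ioo (0:ℝ) d, HasDerivAt φ (deriv φ x) x := fun x hx =>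
    (hφdiff.differentiableAt (isOpen_Ioo.mem_nhds hx)).hasDerivAt
  have hφD2 : ∀ x ∈ Set.Ioo (0:ℝ) d, HasDerivAt (deriv φ) (deriv (deriv φ) x) x := fun x hx =>
    (hφ'diff.differentiableAt (isOpen_Ioo.mem_nhds hx)).hasDerivAt
  -- facts for g
  set F1 : ℝ → ℝ := fun y => A₂ * (Real.sqrt (d - y) ^ 3 - 3/2 * (y * Real.sqrt (d - y)))
    with hF1def
  have hgpos : ∀ x ∈ Set.Ioo (0:ℝ) d, 0 < g x := by
    intro x hx
    have hu : 0 < d - x := sub_pos.2 hx.2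
    exact mul_pos (mul_pos hA hx.1) (mul_pos hu (Real.sqrt_pos.2 hu))
  have hgD : ∀ x ∈ Set.Ioo (0:ℝ) d, HasDerivAt g (F1 x) x := fun x hx =>
    g_deriv d A₂ x hx.2
  have hgcont : Continuous g := by
    rw [hgdef]
    exact (continuous_const.mul continuous_id).mul
      ((continuous_const.sub continuous_id).mul
        (Real.continuous_sqrt.comp (continuous_const.sub continuous_id)))
  -- the comparison function w
  set w : ℝ → ℝ := fun y => Real.sqrt (φ y) - Real.sqrt (g y) with hwdef
  have hwcont : ContinuousOn w (Set.Icc 0 d) :=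
    (Real.continuous_sqrt.comp_continuousOn hcont).sub
      (Real.continuous_sqrt.comp hgcont).continuousOn
  have hg0 : g 0 = 0 := by rw [hgdef]; ring
  have hgd : g d = 0 := by rw [hgdef]; simp
  have hw0 : w 0 = 0 := by rw [hwdef]; simp [h0, hg0]
  have hwd : w d = 0 := by rw [hwdef]; simp [hdd, hgd]
  set w1 : ℝ → ℝ := fun y =>
    deriv φ y / (2 * Real.sqrt (φ y)) - F1 y / (2 * Real.sqrt (g y)) with hw1def
  set w2 : ℝ → ℝ := fun y =>
    (2 * φ y * deriv (deriv φ) y - (deriv φ y)^2) / (4 * φ y * Real.sqrt (φ y))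
    - (2 * g y * (A₂ * (-3 * Real.sqrt (d-y) + 3/4 * y / Real.sqrt (d-y))) - (F1 y)^2)
        / (4 * g y * Real.sqrt (g y)) with hw2def
  have hwD : ∀ x ∈ Set.Ioo (0:ℝ) d, HasDerivAt w (w1 x) x := fun x hx =>
    (sqrtComp' (hpos x hx) (hφD x hx)).sub (sqrtComp' (hgpos x hx) (hgD x hx))
  have hw1D : ∀ x ∈ Set.Ioo (0:ℝ) d, HasDerivAt w1 (w2 x) x := fun x hx =>
    (divSqrt (hpos x hx) (hφD x hx) (hφD2 x hx) rfl).sub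
      (divSqrt (hgpos x hx) (hgD x hx) (F1_deriv d A₂ x hx.2) rfl)
  -- the key interior estimate
  have key : ∀ η ∈ Set.Ioo (0:ℝ) d, φ η ≤ g η := by
    intro η₀ hη₀
    by_contra hcon
    push_neg at hcon
    have hwη₀ : 0 < w η₀ := by
      rw [hwdef]
      have := Real.sqrt_lt_sqrt (hgpos η₀ hη₀).le hcon
      simpa using this
    -- construct the interval (a, b)
    have hAcl : IsClosed (Set.Icc 0 η₀ ∩ w ⁻¹' Set.Iic 0) :=
      (hwcont.mono (Set.Icc_subset_Icc le_rfl hη₀.2.le)).preimage_isClosed_of_isClosed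
        isClosed_Icc isClosed_Iic
    have hAne : (Set.Icc 0 η₀ ∩ w ⁻¹' Set.Iic 0).Nonempty :=
      ⟨0, ⟨Set.left_mem_Icc.2 hη₀.1.le, by simp [hw0]⟩⟩
    have hAbdd : BddAbove (Set.Icc 0 η₀ ∩ w ⁻¹' Set.Iic 0) :=
      ⟨η₀, fun y hy => hy.1.2⟩
    set a := sSup (Set.Icc 0 η₀ ∩ w ⁻¹' Set.Iic 0) with hadef
    have haA : a ∈ Set.Icc 0 η₀ ∩ w ⁻¹' Set.Iic 0 := hAcl.csSup_mem hAne hAbdd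
    have ha0 : 0 ≤ a := haA.1.1
    have hwa : w a ≤ 0 := haA.2
    have haη : a < η₀ := lt_of_le_of_ne haA.1.2 (by
      intro h; rw [h] at hwa; linarith)
    have hBcl : IsClosed (Set.Icc η₀ d ∩ w ⁻¹' Set.Iic 0) :=
      (hwcont.mono (Set.Icc_subset_Icc hη₀.1.le le_rfl)).preimage_isClosed_of_isClosed
        isClosed_Icc isClosed_Iic
    have hBne : (Set.Icc η₀ d ∩ w ⁻¹' Set.Iic 0).Nonempty :=
      ⟨d, ⟨Set.right_mem_Icc.2 hη₀.2.le, by simp [hwd]⟩⟩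
    have hBbdd : BddBelow (Set.Icc η₀ d ∩ w ⁻¹' Set.Iic 0) :=
      ⟨η₀, fun y hy => hy.1.1⟩
    set b := sInf (Set.Icc η₀ d ∩ w ⁻¹' Set.Iic 0) with hbdef
    have hbB : b ∈ Set.Icc η₀ d ∩ w ⁻¹' Set.Iic 0 := hBcl.csInf_mem hBne hBbdd
    have hbd : b ≤ d := hbB.1.2
    have hwb : w b ≤ 0 := hbB.2
    have hηb : η₀ < b := lt_of_le_of_ne hbB.1.1 (by
      intro h; rw [← h] at hwb; linarith)
    have hab : a < b := haη.trans hηb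
    have hsub : Set.Ioo a b ⊆ Set.Ioo 0 d := fun y hy =>
      ⟨lt_of_le_of_lt ha0 hy.1, lt_of_lt_of_le hy.2 hbd⟩
    have hwpos : ∀ x ∈ Set.Ioo a b, 0 < w x := by
      intro x hx
      by_contra hc
      push_neg at hc
      rcases le_total x η₀ with hle | hle
      · have hxA : x ∈ Set.Icc 0 η₀ ∩ w ⁻¹' Set.Iic 0 :=
          ⟨⟨le_of_lt (lt_of_le_of_lt ha0 hx.1), hle⟩, hc⟩
        exact absurd (le_csSup hAbdd hxA) (not_le.2 hx.1)
      · have hxB : x ∈ Set.Icc η₀ d ∩ w ⁻¹' Set.Iic 0 :=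
          ⟨⟨hle, le_of_lt (lt_of_lt_of_le hx.2 hbd)⟩, hc⟩
        exact absurd (csInf_le hBbdd hxB) (not_le.2 hx.2)
    have hφg : ∀ x ∈ Set.Ioo a b, g x < φ x := by
      intro x hx
      by_contra hc
      push_neg at hc
      have h1 : Real.sqrt (φ x) ≤ Real.sqrt (g x) := Real.sqrt_le_sqrt hc
      have h2 := hwpos x hx
      simp only [hwdef] at h2
      linarith
    have hw2nonneg : ∀ x ∈ Set.Ioo a b, 0 ≤ w2 x := by
      intro x hx
      have hx' := hsub hx
      have hφx := hpos x hx'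
      have hgx := hgpos x hx'
      have hsφ : 0 < Real.sqrt (φ x) := Real.sqrt_pos.2 hφx
      have hsg : 0 < Real.sqrt (g x) := Real.sqrt_pos.2 hgx
      have hnum1 : 2 * φ x * deriv (deriv φ) x - deriv φ x ^ 2 = 2*(x - d) := by
        have := heq x hx'; linarith
      have hnum2 : 2 * g x * (A₂ * (-3 * Real.sqrt (d-x) + 3/4 * x / Real.sqrt (d-x)))
          - F1 x ^ 2 ≤ 2*(x - d) := by
        have h := supersol d A₂ x hA hcond hx'.1 hx'.2
        simp only [hgdef, hF1def]
        convert h using 2 <;> ring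
      have hGP : g x * Real.sqrt (g x) ≤ φ x * Real.sqrt (φ x) := by
        have h1 := hφg x hx
        have h2 : Real.sqrt (g x) ≤ Real.sqrt (φ x) := Real.sqrt_le_sqrt h1.le
        exact mul_le_mul h1.le h2 hsg.le hφx.le
      have hxd : x - d < 0 := by linarith [hx'.2]
      simp only [hw2def]
      rw [hnum1, sub_nonneg]
      have h4G : 0 < 4 * g x * Real.sqrt (g x) := by positivity
      have h4P : 0 < 4 * φ x * Real.sqrt (φ x) := by positivity
      rw [div_le_div_iff₀ h4G h4P]
      have t1 : (2 * g x * (A₂ * (-3 * Real.sqrt (d-x) + 3/4 * x / Real.sqrt (d-x))) - F1 x ^ 2)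
          * (4 * φ x * Real.sqrt (φ x)) ≤ (2*(x-d)) * (4 * φ x * Real.sqrt (φ x)) :=
        mul_le_mul_of_nonneg_right hnum2 h4P.le
      have t2 : (2*(x-d)) * (4 * φ x * Real.sqrt (φ x))
          ≤ (2*(x-d)) * (4 * g x * Real.sqrt (g x)) := by nlinarith [hGP, hxd]
      linarith
    have hconv : ConvexOn ℝ (Set.Icc a b) w := by
      apply convexOn_of_hasDerivWithinAt2_nonneg (convex_Icc a b)
        (hwcont.mono (Set.Icc_subset_Icc ha0 hbd)) (f' := w1) (f'' := w2) ?_ ?_ ?_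
      · intro x hx
        rw [interior_Icc] at hx
        exact (hwD x (hsub hx)).hasDerivWithinAt
      · intro x hx
        rw [interior_Icc] at hx
        exact (hw1D x (hsub hx)).hasDerivWithinAt
      · intro x hx
        rw [interior_Icc] at hx
        exact hw2nonneg x hx
    have hmax := hconv.le_on_segment (Set.left_mem_Icc.2 hab.le) (Set.right_mem_Icc.2 hab.le)
      (z := η₀) (by rw [segment_eq_Icc hab.le]; exact ⟨haη.le, hηb.le⟩)
    have hfin : w η₀ ≤ 0 := le_trans hmax (max_le hwa hwb)
    linarith
  -- conclude
  intro η hη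
  rcases eq_or_lt_of_le hη.1 with h0' | h0'
  · rw [← h0', h0] at *
    rw [← h0']
    simp [h0]
  rcases eq_or_lt_of_le hη.2 with hd' | hd'
  · rw [hd']
    simp [hdd, Real.zero_rpow (by norm_num : ((3:ℝ)/2) ≠ 0)]
  · rw [hrpow η hη]
    exact key η ⟨h0', hd'⟩
end
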